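/- arXiv:2410.23376 — 9 statements merged into one kernel-verified Lean document; each statement's English description precedes it below -/
import Mathlib

section
/- The supremum of the set {x : ℝ | ∃ R an 8×8 PSD matrix with Tr₂R = I₄ and x = Re(trace(R·D))} equals the supremum of the set {x : ℝ | ∃ A B : Matrix (Fin 2) (Fin 2) ℂ, A PSD ∧ B PSD ∧ (I₂ − A − B) PSD ∧ x = Re(⟨u|A|u⟩ + ⟨v|B|v⟩)}. (Proposition 2 of the paper, approximate deterministic case: optimization of the retrieval over Choi operators is equivalent to a two-state minimum-error discrimination problem.) -/
open Matrix Kronecker Complex Filter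
open scoped ComplexOrder

set_option maxHeartbeats 1000000

noncomputable section

/-- Outer product `v vᴴ`. -/
def outer {ι : Type*} [Fintype ι] (v : ι → ℂ) : Matrix ι ι ℂ :=
  Matrix.vecMulVec v (star v)

/-- The conjugated memory states `ψ*₀ = (e^{-inα}, e^{inα})/√2`, `ψ*₁ = (e^{inα}, e^{-inα})/√2`. -/
def psiStar (n : ℕ) (α : ℝ) (i : Fin 2) : Fin 2 → ℂ :=
  if i = 0 then
    ((Real.sqrt 2 : ℂ))⁻¹ • ![Complex.exp (-(Complex.I * n * α)), Complex.exp (Complex.I * n * α)]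
  else
    ((Real.sqrt 2 : ℂ))⁻¹ • ![Complex.exp (Complex.I * n * α), Complex.exp (-(Complex.I * n * α))]

/-- `|U⟩⟩ = (e^{iε},0,0,e^{-iε})` in `ℂ^{Fin 2 × Fin 2}`. -/
def Uket (ε : ℝ) : Fin 2 × Fin 2 → ℂ := fun p =>
  if p = (0, 0) then Complex.exp (Complex.I * ε)
  else if p = (1, 1) then Complex.exp (-(Complex.I * ε)) else 0

/-- `|U₀⟩⟩` and `|U₁⟩⟩`. -/
def Ui (α : ℝ) (i : Fin 2) : Fin 2 × Fin 2 → ℂ :=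
  if i = 0 then Uket α else Uket (-α)

/-- The performance operator `D = (1/8) ∑ᵢ (ψ*ᵢ ψ*ᵢᴴ) ⊗ₖ |Uᵢ⟩⟩⟨⟨Uᵢ|`. -/
def Dop (n : ℕ) (α : ℝ) : Matrix (Fin 2 × Fin 2 × Fin 2) (Fin 2 × Fin 2 × Fin 2) ℂ :=
  (1/8 : ℂ) • ∑ i : Fin 2, (outer (psiStar n α i)) ⊗ₖ (outer (Ui α i))

/-- Partial trace over the third (output) factor `H₂`. -/
def ptr2 (R : Matrix (Fin 2 × Fin 2 × Fin 2) (Fin 2 × Fin 2 × Fin 2) ℂ) :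
    Matrix (Fin 2 × Fin 2) (Fin 2 × Fin 2) ℂ :=
  Matrix.of fun p q => ∑ k : Fin 2, R (p.1, p.2, k) (q.1, q.2, k)

/-- The vector `u = (cₙ·c, sₙ·s)`. -/
def uvec (n : ℕ) (α : ℝ) : Fin 2 → ℂ :=
  ![((Real.cos (n * α) * Real.cos α : ℝ) : ℂ), ((Real.sin (n * α) * Real.sin α : ℝ) : ℂ)]

/-- The vector `v = (cₙ·s, -sₙ·c)`. -/
def vvec (n : ℕ) (α : ℝ) : Fin 2 → ℂ :=
  ![((Real.cos (n * α) * Real.sin α : ℝ) : ℂ), ((-(Real.sin (n * α) * Real.cos α) : ℝ) : ℂ)]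

/-- `⟨w|A|w⟩ = star w ⬝ᵥ A.mulVec w`. -/
def brk (w : Fin 2 → ℂ) (A : Matrix (Fin 2) (Fin 2) ℂ) : ℂ :=
  star w ⬝ᵥ A.mulVec w

def KAm : Matrix (Fin 2) (Fin 2 × Fin 2 × Fin 2) ℂ :=
  Matrix.of fun i p => if p.2.2 = p.2.1 then (if i = 0 then 1 else if p.1 = p.2.1 then 1 else -1) else 0
def KBm : Matrix (Fin 2) (Fin 2 × Fin 2 × Fin 2) ℂ :=
  Matrix.of fun i p => if p.2.2 = p.2.1 then (if i = 0 then (if p.2.1 = 0 then 1 else -1) else (if p.1 = 0 then 1 else -1)) else 0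

/-- the unnormalized state `ψ̃₀ ⊗ U₀`. -/
def cvec (n : ℕ) (α : ℝ) : Fin 2 × Fin 2 × Fin 2 → ℂ := fun p =>
  (![Complex.exp (-(Complex.I * n * α)), Complex.exp (Complex.I * n * α)]) p.1 * Uket α p.2

lemma sqrt2_mul : ((Real.sqrt 2 : ℝ) : ℂ) * ((Real.sqrt 2 : ℝ) : ℂ) = 2 := by
  rw [← Complex.ofReal_mul, Real.mul_self_sqrt (by norm_num)]; norm_num

lemma outer_psiStar (n : ℕ) (α : ℝ) (i : Fin 2) :
    outer (psiStar n α i) = (2:ℂ)⁻¹ • outer (if i = 0 then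
      ![Complex.exp (-(Complex.I * n * α)), Complex.exp (Complex.I * n * α)] else
      ![Complex.exp (Complex.I * n * α), Complex.exp (-(Complex.I * n * α))]) := by
  have h : (((Real.sqrt 2 : ℝ) : ℂ))⁻¹ * (((Real.sqrt 2 : ℝ) : ℂ))⁻¹ = (2:ℂ)⁻¹ := by
    rw [← mul_inv, sqrt2_mul]
  fin_cases i <;> ext a b <;> fin_cases a <;> fin_cases b <;>
  · simp [psiStar, outer, Matrix.vecMulVec_apply, Complex.star_def, map_inv₀, Complex.conj_ofReal,
      -Matrix.vecMulVec_cons, -Matrix.cons_vecMulVec]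
    rw [mul_mul_mul_comm, h]

lemma mul_outer_mul {m l : Type*} [Fintype m] [Fintype l] (M : Matrix m l ℂ) (v : l → ℂ) :
    M * outer v * Mᴴ = outer (M.mulVec v) := by
  ext p q
  simp only [outer, Matrix.mul_apply, Matrix.vecMulVec_apply, Matrix.conjTranspose_apply,
    Matrix.mulVec, dotProduct, Pi.star_apply, Complex.star_def, map_sum, _root_.map_mul,
    Finset.sum_mul, Finset.mul_sum]
  refine Finset.sum_congr rfl fun i _ => Finset.sum_congr rfl fun j _ => by ring

lemma outer_add_outer_star {ι : Type*} [Fintype ι] (v : ι → ℂ) :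
    outer v + outer (star v) =
      (2:ℂ) • (outer (fun a => ((v a).re : ℂ)) + outer (fun a => ((v a).im : ℂ))) := by
  ext a b
  simp only [outer, Matrix.add_apply, Matrix.smul_apply, Matrix.vecMulVec_apply, Pi.star_apply,
    Complex.star_def, smul_eq_mul, Complex.conj_ofReal]
  apply Complex.ext <;>
    simp [Complex.mul_re, Complex.mul_im, Complex.add_re, Complex.add_im] <;> ring

lemma outer_prod_kron {ι κ : Type*} [Fintype ι] [Fintype κ] (w : ι → ℂ) (z : κ → ℂ) :
    outer (fun p : ι × κ => w p.1 * z p.2) = outer w ⊗ₖ outer z := by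
  ext ⟨a, b⟩ ⟨c, d⟩
  simp only [outer, Matrix.vecMulVec_apply, Pi.star_apply, Complex.star_def, _root_.map_mul,
    kroneckerMap_apply]
  ring

lemma star_cvec (n : ℕ) (α : ℝ) :
    star (cvec n α) = fun p =>
      (![Complex.exp (Complex.I * n * α), Complex.exp (-(Complex.I * n * α))]) p.1
        * Uket (-α) p.2 := by
  funext ⟨a, b, k⟩
  fin_cases a <;> fin_cases b <;> fin_cases k <;>
  · simp [cvec, Uket, _root_.map_mul, ← Complex.exp_conj, map_neg, _root_.map_mul,
      Complex.conj_I, Complex.conj_ofReal, Complex.conj_natCast]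
    try ring_nf

lemma Dop_cvec (n : ℕ) (α : ℝ) :
    Dop n α = (1/16 : ℂ) • (outer (cvec n α) + outer (star (cvec n α))) := by
  rw [Dop, Fin.sum_univ_two, outer_psiStar, outer_psiStar, star_cvec]
  have h0 : outer (cvec n α) =
      outer ![Complex.exp (-(Complex.I * n * α)), Complex.exp (Complex.I * n * α)]
        ⊗ₖ outer (Uket α) := outer_prod_kron _ _
  have h1 : outer (fun p : Fin 2 × Fin 2 × Fin 2 =>
        (![Complex.exp (Complex.I * n * α), Complex.exp (-(Complex.I * n * α))]) p.1
          * Uket (-α) p.2) =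
      outer ![Complex.exp (Complex.I * n * α), Complex.exp (-(Complex.I * n * α))]
        ⊗ₖ outer (Uket (-α)) := outer_prod_kron _ _
  rw [h0, h1]
  simp only [Ui, reduceIte, one_ne_zero, Fin.isValue, Matrix.smul_kronecker, smul_smul,
    ← smul_add]
  norm_num

lemma exp_I_na (n : ℕ) (α : ℝ) : Complex.exp (Complex.I * n * α) =
    ((Real.cos (n * α) : ℝ) : ℂ) + ((Real.sin (n * α) : ℝ) : ℂ) * Complex.I := by
  rw [show Complex.I * (n:ℂ) * (α:ℂ) = (((n * α : ℝ)) : ℂ) * Complex.I by push_cast; ring,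
    Complex.exp_mul_I, Complex.ofReal_cos, Complex.ofReal_sin]

lemma exp_neg_I_na (n : ℕ) (α : ℝ) : Complex.exp (-(Complex.I * n * α)) =
    ((Real.cos (n * α) : ℝ) : ℂ) - ((Real.sin (n * α) : ℝ) : ℂ) * Complex.I := by
  rw [show -(Complex.I * (n:ℂ) * (α:ℂ)) = ((-(n * α : ℝ) : ℝ) : ℂ) * Complex.I by push_cast; ring,
    Complex.exp_mul_I, Complex.ofReal_neg, Complex.cos_neg, Complex.sin_neg,
    Complex.ofReal_cos, Complex.ofReal_sin]
  ring

lemma exp_I_a (α : ℝ) : Complex.exp (Complex.I * α) =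
    ((Real.cos α : ℝ) : ℂ) + ((Real.sin α : ℝ) : ℂ) * Complex.I := by
  rw [show Complex.I * (α:ℂ) = ((α : ℝ) : ℂ) * Complex.I by ring,
    Complex.exp_mul_I, Complex.ofReal_cos, Complex.ofReal_sin]

lemma exp_neg_I_a (α : ℝ) : Complex.exp (-(Complex.I * α)) =
    ((Real.cos α : ℝ) : ℂ) - ((Real.sin α : ℝ) : ℂ) * Complex.I := by
  rw [show -(Complex.I * (α:ℂ)) = ((-α : ℝ) : ℂ) * Complex.I by push_cast; ring,
    Complex.exp_mul_I, Complex.ofReal_neg, Complex.cos_neg, Complex.sin_neg,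
    Complex.ofReal_cos, Complex.ofReal_sin]
  ring

lemma re_cvec (n : ℕ) (α : ℝ) :
    (fun p => (((cvec n α p).re : ℝ) : ℂ)) = KAmᴴ.mulVec (uvec n α) := by
  funext ⟨a, b, k⟩
  fin_cases a <;> fin_cases b <;> fin_cases k <;>
  · simp [cvec, Uket, KAm, uvec, Matrix.mulVec, dotProduct, Fin.sum_univ_two,
      Matrix.conjTranspose_apply, exp_I_na, exp_neg_I_na, exp_I_a, exp_neg_I_a,
      Complex.add_re, Complex.sub_re, Complex.mul_re, Complex.mul_im,
      -Complex.ofReal_cos, -Complex.ofReal_sin]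
    try push_cast
    try ring

lemma im_cvec (n : ℕ) (α : ℝ) :
    (fun p => (((cvec n α p).im : ℝ) : ℂ)) = KBmᴴ.mulVec (vvec n α) := by
  funext ⟨a, b, k⟩
  fin_cases a <;> fin_cases b <;> fin_cases k <;>
  · simp [cvec, Uket, KBm, vvec, Matrix.mulVec, dotProduct, Fin.sum_univ_two,
      Matrix.conjTranspose_apply, exp_I_na, exp_neg_I_na, exp_I_a, exp_neg_I_a,
      Complex.add_re, Complex.sub_re, Complex.mul_re, Complex.mul_im,
      -Complex.ofReal_cos, -Complex.ofReal_sin]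
    try push_cast
    try ring

lemma Dop_eq (n : ℕ) (α : ℝ) :
    Dop n α = (1/8 : ℂ) • (KAmᴴ * outer (uvec n α) * KAm + KBmᴴ * outer (vvec n α) * KBm) := by
  have hKA : KAmᴴ * outer (uvec n α) * KAm = outer (KAmᴴ.mulVec (uvec n α)) := by
    simpa using mul_outer_mul KAmᴴ (uvec n α)
  have hKB : KBmᴴ * outer (vvec n α) * KBm = outer (KBmᴴ.mulVec (vvec n α)) := by
    simpa using mul_outer_mul KBmᴴ (vvec n α)
  rw [hKA, hKB, ← re_cvec, ← im_cvec, Dop_cvec, outer_add_outer_star, smul_smul]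
  norm_num

def J0m : Matrix (Fin 2) (Fin 2 × Fin 2 × Fin 2) ℂ :=
  Matrix.of fun i p => if p.2.1 = 0 ∧ p.2.2 = 1 then (if i = 0 then 1 else if p.1 = 0 then 1 else -1) else 0
def J1m : Matrix (Fin 2) (Fin 2 × Fin 2 × Fin 2) ℂ :=
  Matrix.of fun i p => if p.2.1 = 1 ∧ p.2.2 = 0 then (if i = 0 then 1 else if p.1 = 0 then -1 else 1) else 0
def E0m : Matrix (Fin 2) (Fin 2 × Fin 2) ℂ :=
  Matrix.of fun i p => if p.2 = 0 then (if i = 0 then 1 else if p.1 = 0 then 1 else -1) else 0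
def E1m : Matrix (Fin 2) (Fin 2 × Fin 2) ℂ :=
  Matrix.of fun i p => if p.2 = 1 then (if i = 0 then 1 else if p.1 = 0 then -1 else 1) else 0

section prods

lemma KA_mul_KA : KAm * KAmᴴ = (4:ℂ) • 1 := by
  ext i j; fin_cases i <;> fin_cases j <;>
    simp [KAm, Matrix.mul_apply, Fintype.sum_prod_type, Fin.sum_univ_two] <;> norm_num
lemma KB_mul_KB : KBm * KBmᴴ = (4:ℂ) • 1 := by
  ext i j; fin_cases i <;> fin_cases j <;>
    simp [KBm, Matrix.mul_apply, Fintype.sum_prod_type, Fin.sum_univ_two] <;> norm_num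
lemma KA_mul_KB : KAm * KBmᴴ = 0 := by
  ext i j; fin_cases i <;> fin_cases j <;>
    simp [KAm, KBm, Matrix.mul_apply, Fintype.sum_prod_type, Fin.sum_univ_two] <;> norm_num
lemma KB_mul_KA : KBm * KAmᴴ = 0 := by
  ext i j; fin_cases i <;> fin_cases j <;>
    simp [KAm, KBm, Matrix.mul_apply, Fintype.sum_prod_type, Fin.sum_univ_two] <;> norm_num
lemma KA_mul_J0 : KAm * J0mᴴ = 0 := by
  ext i j; fin_cases i <;> fin_cases j <;>
    simp [KAm, J0m, Matrix.mul_apply, Fintype.sum_prod_type, Fin.sum_univ_two] <;> norm_num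
lemma KA_mul_J1 : KAm * J1mᴴ = 0 := by
  ext i j; fin_cases i <;> fin_cases j <;>
    simp [KAm, J1m, Matrix.mul_apply, Fintype.sum_prod_type, Fin.sum_univ_two] <;> norm_num
lemma KB_mul_J0 : KBm * J0mᴴ = 0 := by
  ext i j; fin_cases i <;> fin_cases j <;>
    simp [KBm, J0m, Matrix.mul_apply, Fintype.sum_prod_type, Fin.sum_univ_two] <;> norm_num
lemma KB_mul_J1 : KBm * J1mᴴ = 0 := by
  ext i j; fin_cases i <;> fin_cases j <;>
    simp [KBm, J1m, Matrix.mul_apply, Fintype.sum_prod_type, Fin.sum_univ_two] <;> norm_num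

end prods

lemma conj_sandwich {P : Type*} [Fintype P] (K L : Matrix (Fin 2) P ℂ)
    (M : Matrix (Fin 2) (Fin 2) ℂ) :
    K * (Lᴴ * M * L) * Kᴴ = (K * Lᴴ) * M * (K * Lᴴ)ᴴ := by
  rw [Matrix.conjTranspose_mul, Matrix.conjTranspose_conjTranspose]
  simp [Matrix.mul_assoc]

lemma brk_trace (w : Fin 2 → ℂ) (M : Matrix (Fin 2) (Fin 2) ℂ) :
    brk w M = (M * outer w).trace := by
  simp [brk, outer, Matrix.trace, Matrix.diag, Matrix.mul_apply, Matrix.vecMulVec_apply,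
    Matrix.mulVec, dotProduct, Fin.sum_univ_two, Complex.star_def]
  ring

lemma trace_conj_helper {P : Type*} [Fintype P] (R : Matrix P P ℂ)
    (M : Matrix (Fin 2) (Fin 2) ℂ) (K : Matrix (Fin 2) P ℂ) :
    (R * (Kᴴ * M * K)).trace = (K * R * Kᴴ * M).trace := by
  rw [show R * (Kᴴ * M * K) = (R * Kᴴ * M) * K by simp [Matrix.mul_assoc],
    Matrix.trace_mul_comm, show K * (R * Kᴴ * M) = (K * R * Kᴴ) * M by simp [Matrix.mul_assoc]]

lemma value_eq (n : ℕ) (α : ℝ) (R : Matrix (Fin 2 × Fin 2 × Fin 2) (Fin 2 × Fin 2 × Fin 2) ℂ) :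
    (R * Dop n α).trace = brk (uvec n α) ((1/8:ℂ) • (KAm * R * KAmᴴ))
      + brk (vvec n α) ((1/8:ℂ) • (KBm * R * KBmᴴ)) := by
  rw [Dop_eq, brk_trace, brk_trace, Matrix.mul_smul, Matrix.trace_smul, Matrix.mul_add,
    Matrix.trace_add, trace_conj_helper, trace_conj_helper, Matrix.smul_mul, Matrix.smul_mul,
    Matrix.trace_smul, Matrix.trace_smul]
  simp [smul_add, mul_add]

lemma psd_smul_real {d : Type*} [Fintype d] {M : Matrix d d ℂ} (hM : M.PosSemidef)
    {c : ℝ} (hc : 0 ≤ c) : ((c:ℂ) • M).PosSemidef := by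
  rw [Matrix.posSemidef_iff_dotProduct_mulVec]
  constructor
  · unfold Matrix.IsHermitian
    rw [Matrix.conjTranspose_smul, hM.1.eq]
    congr 1
    exact Complex.conj_ofReal c
  · intro x
    rw [Matrix.smul_mulVec, dotProduct_smul, smul_eq_mul]
    exact mul_nonneg (by exact_mod_cast hc) (hM.dotProduct_mulVec_nonneg x)

/-- The unconditional constraint identity. -/
lemma constr_identity (R : Matrix (Fin 2 × Fin 2 × Fin 2) (Fin 2 × Fin 2 × Fin 2) ℂ) :
    (1/8:ℂ) • (KAm * R * KAmᴴ) + (1/8:ℂ) • (KBm * R * KBmᴴ)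
      + (1/4:ℂ) • (J0m * R * J0mᴴ + J1m * R * J1mᴴ)
    = (1/4:ℂ) • (E0m * (ptr2 R) * E0mᴴ + E1m * (ptr2 R) * E1mᴴ) := by
  ext i j
  fin_cases i <;> fin_cases j <;>
  · simp [KAm, KBm, J0m, J1m, E0m, E1m, ptr2, Matrix.mul_apply, Fintype.sum_prod_type,
      Fin.sum_univ_two, Matrix.conjTranspose_apply, Matrix.smul_apply, Matrix.add_apply,
      Complex.star_def]
    ring

lemma E_identity : (1/4:ℂ) • (E0m * (1 : Matrix (Fin 2 × Fin 2) (Fin 2 × Fin 2) ℂ) * E0mᴴ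
    + E1m * (1 : Matrix (Fin 2 × Fin 2) (Fin 2 × Fin 2) ℂ) * E1mᴴ) = (1 : Matrix (Fin 2) (Fin 2) ℂ) := by
  ext i j
  fin_cases i <;> fin_cases j <;>
  · simp [E0m, E1m, Matrix.mul_one, Matrix.mul_apply, Fintype.sum_prod_type, Fin.sum_univ_two,
      Matrix.conjTranspose_apply, Matrix.one_apply, Prod.ext_iff]
    try norm_num

lemma ptr2_rev (A B : Matrix (Fin 2) (Fin 2) ℂ) :
    ptr2 ((1/2:ℂ) • (KAmᴴ * A * KAm + KBmᴴ * B * KBm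
      + J0mᴴ * (1 - A - B) * J0m + J1mᴴ * (1 - A - B) * J1m)) = 1 := by
  ext p q
  obtain ⟨a, b⟩ := p; obtain ⟨a', b'⟩ := q
  fin_cases a <;> fin_cases b <;> fin_cases a' <;> fin_cases b' <;>
  · simp [ptr2, KAm, KBm, J0m, J1m, Matrix.mul_apply, Fin.sum_univ_two,
      Matrix.conjTranspose_apply, Matrix.smul_apply, Matrix.add_apply, Matrix.sub_apply,
      Matrix.one_apply, Complex.star_def, Prod.ext_iff, Prod.fst_zero, Prod.snd_zero,
      Prod.fst_one, Prod.snd_one]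
    try ring

lemma KA_sandwich (A B C : Matrix (Fin 2) (Fin 2) ℂ) :
    (1/8:ℂ) • (KAm * ((1/2:ℂ) • (KAmᴴ * A * KAm + KBmᴴ * B * KBm
      + J0mᴴ * C * J0m + J1mᴴ * C * J1m)) * KAmᴴ) = A := by
  rw [Matrix.mul_smul, Matrix.smul_mul, smul_smul]
  rw [Matrix.mul_add, Matrix.mul_add, Matrix.mul_add, Matrix.add_mul, Matrix.add_mul,
    Matrix.add_mul]
  rw [conj_sandwich, conj_sandwich, conj_sandwich, conj_sandwich, KA_mul_KA, KA_mul_KB,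
    KA_mul_J0, KA_mul_J1]
  simp [Matrix.smul_mul, Matrix.mul_smul, smul_smul, Matrix.conjTranspose_smul,
    Matrix.conjTranspose_one]
  norm_num

lemma KB_sandwich (A B C : Matrix (Fin 2) (Fin 2) ℂ) :
    (1/8:ℂ) • (KBm * ((1/2:ℂ) • (KAmᴴ * A * KAm + KBmᴴ * B * KBm
      + J0mᴴ * C * J0m + J1mᴴ * C * J1m)) * KBmᴴ) = B := by
  rw [Matrix.mul_smul, Matrix.smul_mul, smul_smul]
  rw [Matrix.mul_add, Matrix.mul_add, Matrix.mul_add, Matrix.add_mul, Matrix.add_mul,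
    Matrix.add_mul]
  rw [conj_sandwich, conj_sandwich, conj_sandwich, conj_sandwich, KB_mul_KA, KB_mul_KB,
    KB_mul_J0, KB_mul_J1]
  simp [Matrix.smul_mul, Matrix.mul_smul, smul_smul, Matrix.conjTranspose_smul,
    Matrix.conjTranspose_one]
  norm_num

theorem deterministic_retrieval_as_discrimination (n : ℕ) (hn : 1 ≤ n) (α : ℝ) (hα : 0 < α)
    (hdist : 4 * n * α < Real.pi) :
    sSup {x : ℝ | ∃ R : Matrix (Fin 2 × Fin 2 × Fin 2) (Fin 2 × Fin 2 × Fin 2) ℂ,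
        R.PosSemidef ∧ ptr2 R = 1 ∧ x = ((R * Dop n α).trace).re}
    = sSup {x : ℝ | ∃ A B : Matrix (Fin 2) (Fin 2) ℂ,
        A.PosSemidef ∧ B.PosSemidef ∧ (1 - A - B).PosSemidef ∧
        x = (brk (uvec n α) A + brk (vvec n α) B).re} := by
  have hset : {x : ℝ | ∃ R : Matrix (Fin 2 × Fin 2 × Fin 2) (Fin 2 × Fin 2 × Fin 2) ℂ,
        R.PosSemidef ∧ ptr2 R = 1 ∧ x = ((R * Dop n α).trace).re}
      = {x : ℝ | ∃ A B : Matrix (Fin 2) (Fin 2) ℂ,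
        A.PosSemidef ∧ B.PosSemidef ∧ (1 - A - B).PosSemidef ∧
        x = (brk (uvec n α) A + brk (vvec n α) B).re} := by
    ext x
    constructor
    · rintro ⟨R, hR, hR2, rfl⟩
      refine ⟨(1/8:ℂ) • (KAm * R * KAmᴴ), (1/8:ℂ) • (KBm * R * KBmᴴ), ?_, ?_, ?_, ?_⟩
      · rw [show (1/8:ℂ) = ((1/8:ℝ):ℂ) by norm_num]
        exact psd_smul_real (hR.mul_mul_conjTranspose_same KAm) (by norm_num)
      · rw [show (1/8:ℂ) = ((1/8:ℝ):ℂ) by norm_num]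
        exact psd_smul_real (hR.mul_mul_conjTranspose_same KBm) (by norm_num)
      · have h1 : (1/8:ℂ) • (KAm * R * KAmᴴ) + (1/8:ℂ) • (KBm * R * KBmᴴ)
            + (1/4:ℂ) • (J0m * R * J0mᴴ + J1m * R * J1mᴴ) = 1 := by
          rw [constr_identity, hR2, E_identity]
        have h2 : 1 - (1/8:ℂ) • (KAm * R * KAmᴴ) - (1/8:ℂ) • (KBm * R * KBmᴴ)
            = (1/4:ℂ) • (J0m * R * J0mᴴ + J1m * R * J1mᴴ) := by
          rw [← h1]; abel
        rw [h2, show (1/4:ℂ) = ((1/4:ℝ):ℂ) by norm_num]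
        exact psd_smul_real ((hR.mul_mul_conjTranspose_same J0m).add
          (hR.mul_mul_conjTranspose_same J1m)) (by norm_num)
      · rw [value_eq]
    · rintro ⟨A, B, hA, hB, hC, rfl⟩
      refine ⟨(1/2:ℂ) • (KAmᴴ * A * KAm + KBmᴴ * B * KBm
          + J0mᴴ * (1 - A - B) * J0m + J1mᴴ * (1 - A - B) * J1m), ?_, ptr2_rev A B, ?_⟩
      · rw [show (1/2:ℂ) = ((1/2:ℝ):ℂ) by norm_num]
        exact psd_smul_real ((((hA.conjTranspose_mul_mul_same KAm).add
          (hB.conjTranspose_mul_mul_same KBm)).add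
          (hC.conjTranspose_mul_mul_same J0m)).add
          (hC.conjTranspose_mul_mul_same J1m)) (by norm_num)
      · rw [value_eq, KA_sandwich A B (1 - A - B), KB_sandwich A B (1 - A - B)]
  rw [hset]
end
end

section
/- Assume moreover cos(2nα)·(cos(2α) + sin(2α)) ≥ 1 (the small-α regime). Then (1 − cos(2nα)²)/(2·(1 − cos(2nα)·cos(2α))) is the greatest element of the set {x : ℝ | ∃ A B : Matrix (Fin 2) (Fin 2) ℂ, A PSD ∧ B PSD ∧ (I₂ − A − B) PSD ∧ ⟨v|A|v⟩ = 0 ∧ ⟨u|B|u⟩ = 0 ∧ x = Re(⟨u|A|u⟩ + ⟨v|B|v⟩)}. (The small-α branch of Eq. (23): optimal success probability of perfect probabilistic storage and retrieval of two unitaries.) -/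
open Matrix Kronecker Complex Filter
open scoped ComplexOrder

noncomputable section

def wvec (n : ℕ) (α : ℝ) : Fin 2 → ℂ :=
  ![((Real.sin (n * α) * Real.cos α : ℝ) : ℂ), ((Real.cos (n * α) * Real.sin α : ℝ) : ℂ)]

def zvec (n : ℕ) (α : ℝ) : Fin 2 → ℂ :=
  ![((-(Real.sin (n * α) * Real.sin α) : ℝ) : ℂ), ((Real.cos (n * α) * Real.cos α : ℝ) : ℂ)]

def wpvec (n : ℕ) (α : ℝ) : Fin 2 → ℂ :=
  ![((-(Real.cos (n * α) * Real.sin α) : ℝ) : ℂ), ((Real.sin (n * α) * Real.cos α : ℝ) : ℂ)]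

lemma brk_vecMulVec (x w : Fin 2 → ℂ) :
    brk x (Matrix.vecMulVec w (star w)) = (star x ⬝ᵥ w) * (star w ⬝ᵥ x) := by
  simp [brk, Matrix.mulVec, Matrix.vecMulVec_apply, dotProduct, Fin.sum_univ_two]
  ring

lemma brk_smul (c : ℂ) (x : Fin 2 → ℂ) (M : Matrix (Fin 2) (Fin 2) ℂ) :
    brk x (c • M) = c * brk x M := by
  simp [brk, Matrix.smul_mulVec, dotProduct_smul, smul_eq_mul]
  ring

lemma smul_vecMulVec_posSemidef (c : ℝ) (hc : 0 ≤ c) (w : Fin 2 → ℂ) :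
    ((c : ℂ) • Matrix.vecMulVec w (star w)).PosSemidef := by
  refine Matrix.PosSemidef.of_dotProduct_mulVec_nonneg ?_ ?_
  · unfold Matrix.IsHermitian
    ext i j
    simp [Matrix.conjTranspose_apply, Matrix.vecMulVec_apply, Complex.conj_ofReal, mul_comm]
  · intro x
    have h := brk_vecMulVec x w
    have h2 := brk_smul (c : ℂ) x (Matrix.vecMulVec w (star w))
    show 0 ≤ star x ⬝ᵥ ((c : ℂ) • Matrix.vecMulVec w (star w)) *ᵥ x
    rw [show star x ⬝ᵥ ((c : ℂ) • Matrix.vecMulVec w (star w)) *ᵥ x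
        = brk x ((c : ℂ) • Matrix.vecMulVec w (star w)) from rfl, h2, h]
    have h3 : star w ⬝ᵥ x = star (star x ⬝ᵥ w) := by
      rw [star_dotProduct]
    rw [h3]
    exact mul_nonneg (Complex.zero_le_real.2 hc) (mul_star_self_nonneg _)

lemma brk_decomp (A : Matrix (Fin 2) (Fin 2) ℂ) (hA : A.IsHermitian)
    (x y v : Fin 2 → ℂ) (b g : ℝ) (hx : x = (b : ℂ) • y + (g : ℂ) • v)
    (hv : A *ᵥ v = 0) :
    brk x A = ((b ^ 2 : ℝ) : ℂ) * brk y A := by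
  have hrow : star v ᵥ* A = 0 := by
    have h := Matrix.star_mulVec A v
    rw [hA.eq] at h
    rw [← h, hv]
    simp
  unfold brk
  subst hx
  rw [Matrix.mulVec_add, Matrix.mulVec_smul, Matrix.mulVec_smul, hv, smul_zero, add_zero]
  have hsv : star v ⬝ᵥ ((b:ℂ) • A *ᵥ y) = 0 := by
    rw [dotProduct_smul, Matrix.dotProduct_mulVec, hrow]
    simp
  rw [star_add, star_smul, star_smul, add_dotProduct, smul_dotProduct, smul_dotProduct, hsv]
  simp [dotProduct_smul, smul_eq_mul]
  push_cast
  ring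

set_option maxHeartbeats 4000000 in
theorem optimal_success_small_alpha (n : ℕ) (hn : 1 ≤ n) (α : ℝ) (hα : 0 < α)
    (hdist : 4 * n * α < Real.pi)
    (hreg : 1 ≤ Real.cos (2 * n * α) * (Real.cos (2 * α) + Real.sin (2 * α))) :
    IsGreatest
      {x : ℝ | ∃ A B : Matrix (Fin 2) (Fin 2) ℂ,
        A.PosSemidef ∧ B.PosSemidef ∧ (1 - A - B).PosSemidef ∧
        brk (vvec n α) A = 0 ∧ brk (uvec n α) B = 0 ∧
        x = (brk (uvec n α) A + brk (vvec n α) B).re}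
      ((1 - Real.cos (2 * n * α) ^ 2) / (2 * (1 - Real.cos (2 * n * α) * Real.cos (2 * α)))) := by
  have e1 : Real.cos (2 * (n:ℝ) * α) = Real.cos ((n:ℝ) * α) ^ 2 - Real.sin ((n:ℝ) * α) ^ 2 := by
    rw [show (2:ℝ) * (n:ℝ) * α = 2 * ((n:ℝ) * α) by ring, Real.cos_two_mul]
    linear_combination Real.sin_sq_add_cos_sq ((n:ℝ) * α)
  have e2 : Real.cos (2 * α) = Real.cos α ^ 2 - Real.sin α ^ 2 := by
    rw [Real.cos_two_mul]
    linear_combination Real.sin_sq_add_cos_sq α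
  have e3 : Real.sin (2 * α) = 2 * Real.sin α * Real.cos α := Real.sin_two_mul α
  rw [e1, e2] at hreg ⊢
  rw [e3] at hreg
  set s := Real.sin α with hsdef
  set c := Real.cos α with hcdef
  set sn := Real.sin ((n:ℝ) * α) with hsndef
  set cn := Real.cos ((n:ℝ) * α) with hcndef
  have hpy : s ^ 2 + c ^ 2 = 1 := Real.sin_sq_add_cos_sq α
  have hpyn : sn ^ 2 + cn ^ 2 = 1 := Real.sin_sq_add_cos_sq ((n:ℝ) * α)
  -- positivity facts
  have hπ : (0:ℝ) < Real.pi := Real.pi_pos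
  have hn1 : (1:ℝ) ≤ (n:ℝ) := by exact_mod_cast hn
  have hna : 0 < (n:ℝ) * α := by nlinarith
  have hna4 : (n:ℝ) * α < Real.pi / 4 := by nlinarith
  have hα4 : α < Real.pi / 4 := by nlinarith
  have hs : 0 < s := Real.sin_pos_of_pos_of_lt_pi hα (by nlinarith)
  have hc : 0 < c := Real.cos_pos_of_mem_Ioo ⟨by nlinarith, by nlinarith⟩
  have hsn : 0 < sn := Real.sin_pos_of_pos_of_lt_pi hna (by nlinarith)
  have hcn : 0 < cn := Real.cos_pos_of_mem_Ioo ⟨by nlinarith, by nlinarith⟩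
  set Q : ℝ := sn ^ 2 * c ^ 2 + cn ^ 2 * s ^ 2 with hQdef
  set P : ℝ := sn ^ 2 * s ^ 2 + cn ^ 2 * c ^ 2 with hPdef
  set R : ℝ := (cn ^ 2 - sn ^ 2) * (s * c) with hRdef
  have hQ : 0 < Q := by
    have := mul_pos (pow_pos hsn 2) (pow_pos hc 2)
    have := mul_pos (pow_pos hcn 2) (pow_pos hs 2)
    rw [hQdef]; linarith
  have hP : 0 < P := by
    have := mul_pos (pow_pos hsn 2) (pow_pos hs 2)
    have := mul_pos (pow_pos hcn 2) (pow_pos hc 2)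
    rw [hPdef]; linarith
  have hQ0 : Q ≠ 0 := ne_of_gt hQ
  have hP0 : P ≠ 0 := ne_of_gt hP
  have hRQ : Q ≤ R := by
    rw [hQdef, hRdef]
    nlinarith [hreg, hpy, hpyn]
  have hMval : (1 - (cn ^ 2 - sn ^ 2) ^ 2) / (2 * (1 - (cn ^ 2 - sn ^ 2) * (c ^ 2 - s ^ 2)))
      = sn ^ 2 * cn ^ 2 / Q := by
    have h2Q : 2 * (1 - (cn ^ 2 - sn ^ 2) * (c ^ 2 - s ^ 2)) = 4 * Q := by
      rw [hQdef]; nlinarith [hpy, hpyn, sq_nonneg (s*c)]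
    have hnum : 1 - (cn ^ 2 - sn ^ 2) ^ 2 = 4 * (sn ^ 2 * cn ^ 2) := by
      nlinarith [hpyn]
    rw [h2Q, hnum]
    field_simp
  -- real component identities
  have hkey : ∀ x a b e : ℝ, x*Q - (a + b) = e*(s^2+c^2-1) → x = a/Q + b/Q := by
    intro x a b e h
    rw [← add_div, eq_div_iff hQ0]
    linear_combination h + e*hpy
  have hkeyP : ∀ x a b e : ℝ, x*P - (a + b) = e*(s^2+c^2-1) → x = a/P + b/P := by
    intro x a b e h
    rw [← add_div, eq_div_iff hP0]
    linear_combination h + e*hpy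
  have hu0 : cn*c = (sn*cn/Q)*(sn*c) + (R/Q)*(cn*s) := by
    rw [div_mul_eq_mul_div, div_mul_eq_mul_div]
    refine hkey _ _ _ (cn*c*sn^2) ?_
    rw [hQdef, hRdef]; ring
  have hu1 : sn*s = (sn*cn/Q)*(cn*s) + (R/Q)*(-(sn*c)) := by
    rw [div_mul_eq_mul_div, div_mul_eq_mul_div]
    refine hkey _ _ _ (sn*s*cn^2) ?_
    rw [hQdef, hRdef]; ring
  have hv0 : cn*s = (-(sn*cn)/P)*(-(sn*s)) + (R/P)*(cn*c) := by
    rw [div_mul_eq_mul_div, div_mul_eq_mul_div]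
    refine hkeyP _ _ _ (cn*s*sn^2) ?_
    rw [hPdef, hRdef]; ring
  have hv1 : -(sn*c) = (-(sn*cn)/P)*(cn*c) + (R/P)*(sn*s) := by
    rw [div_mul_eq_mul_div, div_mul_eq_mul_div]
    refine hkeyP _ _ _ (-(sn*c*cn^2)) ?_
    rw [hPdef, hRdef]; ring
  have hw0 : sn*c = (R/P)*(-(sn*s)) + (sn*cn/P)*(cn*c) := by
    rw [div_mul_eq_mul_div, div_mul_eq_mul_div]
    refine hkeyP _ _ _ (sn*c*cn^2) ?_
    rw [hPdef, hRdef]; ring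
  have hw1 : cn*s = (R/P)*(cn*c) + (sn*cn/P)*(sn*s) := by
    rw [div_mul_eq_mul_div, div_mul_eq_mul_div]
    refine hkeyP _ _ _ (cn*s*sn^2) ?_
    rw [hPdef, hRdef]; ring
  -- vector decompositions
  have hu_dec : uvec n α = (((sn*cn/Q : ℝ)):ℂ) • wvec n α + (((R/Q : ℝ)):ℂ) • vvec n α := by
    funext i
    fin_cases i <;>
      simp only [uvec, vvec, wvec, Pi.add_apply, Pi.smul_apply, smul_eq_mul, Fin.zero_eta,
        Fin.mk_one, Matrix.cons_val_zero, Matrix.cons_val_one, Matrix.head_cons] <;>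
      simp only [← hsdef, ← hcdef, ← hsndef, ← hcndef]
    · exact_mod_cast congrArg Complex.ofReal hu0
    · exact_mod_cast congrArg Complex.ofReal hu1
  have hv_dec : vvec n α = (((-(sn*cn)/P : ℝ)):ℂ) • zvec n α + (((R/P : ℝ)):ℂ) • uvec n α := by
    funext i
    fin_cases i <;>
      simp only [uvec, vvec, zvec, Pi.add_apply, Pi.smul_apply, smul_eq_mul, Fin.zero_eta,
        Fin.mk_one, Matrix.cons_val_zero, Matrix.cons_val_one, Matrix.head_cons] <;>
      simp only [← hsdef, ← hcdef, ← hsndef, ← hcndef]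
    · exact_mod_cast congrArg Complex.ofReal hv0
    · exact_mod_cast congrArg Complex.ofReal hv1
  have hw_dec : wvec n α = (((R/P : ℝ)):ℂ) • zvec n α + (((sn*cn/P : ℝ)):ℂ) • uvec n α := by
    funext i
    fin_cases i <;>
      simp only [uvec, wvec, zvec, Pi.add_apply, Pi.smul_apply, smul_eq_mul, Fin.zero_eta,
        Fin.mk_one, Matrix.cons_val_zero, Matrix.cons_val_one, Matrix.head_cons] <;>
      simp only [← hsdef, ← hcdef, ← hsndef, ← hcndef]
    · exact_mod_cast congrArg Complex.ofReal hw0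
    · exact_mod_cast congrArg Complex.ofReal hw1
  -- dot products
  have hww : star (wvec n α) ⬝ᵥ wvec n α = (Q:ℂ) := by
    simp only [wvec, dotProduct, Fin.sum_univ_two, Pi.star_apply,
      Matrix.cons_val_zero, Matrix.cons_val_one, Matrix.head_cons, Complex.star_def,
      Complex.conj_ofReal]
    simp only [← hsdef, ← hcdef, ← hsndef, ← hcndef]
    have : (sn*c)*(sn*c) + (cn*s)*(cn*s) = Q := by rw [hQdef]; ring
    exact_mod_cast congrArg Complex.ofReal this
  have hvw : star (vvec n α) ⬝ᵥ wvec n α = 0 := by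
    simp only [vvec, wvec, dotProduct, Fin.sum_univ_two, Pi.star_apply,
      Matrix.cons_val_zero, Matrix.cons_val_one, Matrix.head_cons, Complex.star_def,
      Complex.conj_ofReal]
    simp only [← hsdef, ← hcdef, ← hsndef, ← hcndef]
    have : (cn*s)*(sn*c) + (-(sn*c))*(cn*s) = 0 := by ring
    exact_mod_cast congrArg Complex.ofReal this
  have hwv' : star (wvec n α) ⬝ᵥ vvec n α = 0 := by
    simp only [vvec, wvec, dotProduct, Fin.sum_univ_two, Pi.star_apply,
      Matrix.cons_val_zero, Matrix.cons_val_one, Matrix.head_cons, Complex.star_def,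
      Complex.conj_ofReal]
    simp only [← hsdef, ← hcdef, ← hsndef, ← hcndef]
    have : (sn*c)*(cn*s) + (cn*s)*(-(sn*c)) = 0 := by ring
    exact_mod_cast congrArg Complex.ofReal this
  have huw : star (uvec n α) ⬝ᵥ wvec n α = ((sn*cn : ℝ):ℂ) := by
    simp only [uvec, wvec, dotProduct, Fin.sum_univ_two, Pi.star_apply,
      Matrix.cons_val_zero, Matrix.cons_val_one, Matrix.head_cons, Complex.star_def,
      Complex.conj_ofReal]
    simp only [← hsdef, ← hcdef, ← hsndef, ← hcndef]
    have : (cn*c)*(sn*c) + (sn*s)*(cn*s) = sn*cn := by linear_combination (sn*cn)*hpy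
    exact_mod_cast congrArg Complex.ofReal this
  have hwu : star (wvec n α) ⬝ᵥ uvec n α = ((sn*cn : ℝ):ℂ) := by
    simp only [uvec, wvec, dotProduct, Fin.sum_univ_two, Pi.star_apply,
      Matrix.cons_val_zero, Matrix.cons_val_one, Matrix.head_cons, Complex.star_def,
      Complex.conj_ofReal]
    simp only [← hsdef, ← hcdef, ← hsndef, ← hcndef]
    have : (sn*c)*(cn*c) + (cn*s)*(sn*s) = sn*cn := by linear_combination (sn*cn)*hpy
    exact_mod_cast congrArg Complex.ofReal this
  rw [hMval]
  constructor
  · -- membership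
    refine ⟨(((Q⁻¹ : ℝ)):ℂ) • Matrix.vecMulVec (wvec n α) (star (wvec n α)), 0,
      smul_vecMulVec_posSemidef Q⁻¹ (by positivity) _, Matrix.PosSemidef.zero, ?_, ?_, ?_, ?_⟩
    · rw [sub_zero]
      have hid : (1 : Matrix (Fin 2) (Fin 2) ℂ)
          - (((Q⁻¹ : ℝ)):ℂ) • Matrix.vecMulVec (wvec n α) (star (wvec n α))
          = (((Q⁻¹ : ℝ)):ℂ) • Matrix.vecMulVec (wpvec n α) (star (wpvec n α)) := by
        ext i j
        fin_cases i <;> fin_cases j <;>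
          simp only [wvec, wpvec, Matrix.sub_apply, Matrix.smul_apply, Matrix.one_apply,
            Matrix.vecMulVec_apply, Pi.star_apply, Complex.star_def, Complex.conj_ofReal,
            smul_eq_mul, Matrix.cons_val_zero, Matrix.cons_val_one, Matrix.head_cons,
            if_true, if_false, Fin.zero_eta, Fin.mk_one, ne_eq, zero_ne_one, one_ne_zero,
            reduceIte]
        · have : (1:ℝ) - Q⁻¹*((sn*c)*(sn*c)) = Q⁻¹*((-(cn*s))*(-(cn*s))) := by
            rw [hQdef] at hQ0 ⊢; field_simp; ring
          simp only [← hsdef, ← hcdef, ← hsndef, ← hcndef]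
          push_cast
          exact_mod_cast congrArg Complex.ofReal this
        · have : (0:ℝ) - Q⁻¹*((sn*c)*(cn*s)) = Q⁻¹*((-(cn*s))*(sn*c)) := by ring
          simp only [← hsdef, ← hcdef, ← hsndef, ← hcndef]
          push_cast
          exact_mod_cast congrArg Complex.ofReal this
        · have : (0:ℝ) - Q⁻¹*((cn*s)*(sn*c)) = Q⁻¹*((sn*c)*(-(cn*s))) := by ring
          simp only [← hsdef, ← hcdef, ← hsndef, ← hcndef]
          push_cast
          exact_mod_cast congrArg Complex.ofReal this
        · have : (1:ℝ) - Q⁻¹*((cn*s)*(cn*s)) = Q⁻¹*((sn*c)*(sn*c)) := by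
            rw [hQdef] at hQ0 ⊢; field_simp; ring
          simp only [← hsdef, ← hcdef, ← hsndef, ← hcndef]
          push_cast
          exact_mod_cast congrArg Complex.ofReal this
      rw [hid]
      exact smul_vecMulVec_posSemidef Q⁻¹ (by positivity) _
    · rw [brk_smul, brk_vecMulVec, hvw]
      simp
    · simp [brk]
    · rw [brk_smul, brk_vecMulVec, huw, hwu]
      simp only [brk, Matrix.zero_mulVec, dotProduct_zero, add_zero]
      have : ((Q⁻¹:ℝ):ℂ) * (((sn*cn : ℝ):ℂ) * ((sn*cn : ℝ):ℂ))
          = (((Q⁻¹ * ((sn*cn) * (sn*cn)) : ℝ)):ℂ) := by push_cast; ring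
      rw [this, Complex.ofReal_re]
      field_simp
  · -- upper bound
    rintro x ⟨A, B, hA, hB, hI, hvA, huB, hxv⟩
    have hAv : A *ᵥ vvec n α = 0 := (hA.dotProduct_mulVec_zero_iff _).1 hvA
    have hBu : B *ᵥ uvec n α = 0 := (hB.dotProduct_mulVec_zero_iff _).1 huB
    have hbrkA := brk_decomp A hA.1 (uvec n α) (wvec n α) (vvec n α) (sn*cn/Q) (R/Q) hu_dec hAv
    have hbrkB := brk_decomp B hB.1 (vvec n α) (zvec n α) (uvec n α) (-(sn*cn)/P) (R/P) hv_dec hBu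
    have hbrkWB := brk_decomp B hB.1 (wvec n α) (zvec n α) (uvec n α) (R/P) (sn*cn/P) hw_dec hBu
    set aR := (brk (wvec n α) A).re with haRdef
    set bR := (brk (zvec n α) B).re with hbRdef
    have haR : 0 ≤ aR := by
      have h := hA.dotProduct_mulVec_nonneg (wvec n α)
      rw [Complex.le_def] at h
      have h1 := h.1
      simp only [Complex.zero_re] at h1
      exact h1
    have hbR : 0 ≤ bR := by
      have h := hB.dotProduct_mulVec_nonneg (zvec n α)
      rw [Complex.le_def] at h
      have h1 := h.1
      simp only [Complex.zero_re] at h1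
      exact h1
    have hcon := hI.dotProduct_mulVec_nonneg (wvec n α)
    rw [Matrix.sub_mulVec, Matrix.sub_mulVec, Matrix.one_mulVec, dotProduct_sub,
      dotProduct_sub, hww] at hcon
    have hconA : star (wvec n α) ⬝ᵥ A *ᵥ wvec n α = brk (wvec n α) A := rfl
    have hconB : star (wvec n α) ⬝ᵥ B *ᵥ wvec n α = brk (wvec n α) B := rfl
    rw [hconA, hconB, hbrkWB] at hcon
    rw [Complex.le_def] at hcon
    have hconR : aR + (R/P)^2 * bR ≤ Q := by
      have h := hcon.1
      simp only [Complex.zero_re, Complex.sub_re, Complex.ofReal_re,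
        Complex.re_ofReal_mul] at h
      rw [haRdef, hbRdef]; linarith
    rw [hxv, hbrkA, hbrkB]
    simp only [Complex.add_re, Complex.re_ofReal_mul, ← haRdef, ← hbRdef]
    clear_value aR bR
    have e : (sn*cn/Q)^2*aR + ((-(sn*cn)/P))^2*bR = sn^2*cn^2*(aR*P^2 + bR*Q^2)/(Q^2*P^2) := by
      field_simp
    rw [e, div_le_div_iff₀ (by positivity) hQ]
    have k2 : aR*P^2 + R^2*bR ≤ Q*P^2 := by
      have h := mul_le_mul_of_nonneg_right hconR (le_of_lt (pow_pos hP 2))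
      calc aR*P^2 + R^2*bR = (aR + (R/P)^2*bR)*P^2 := by field_simp
        _ ≤ Q*P^2 := h
    have hR2 : Q^2 ≤ R^2 := by
      have := pow_le_pow_left₀ hQ.le hRQ 2
      linarith
    have k3 : 0 ≤ bR*(R^2-Q^2) := mul_nonneg hbR (by linarith)
    have m1 : (aR*P^2 + bR*Q^2)*Q ≤ Q^2*P^2 := by
      have p2 := mul_le_mul_of_nonneg_right k2 hQ.le
      have p3 := mul_nonneg k3 hQ.le
      linarith [p2, p3]
    have hA0 : (0:ℝ) ≤ sn^2*cn^2 := by positivity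
    have := mul_le_mul_of_nonneg_left m1 hA0
    linarith [this]
end
end

section
/- For all β, γ ∈ ℝ and l ∈ {0,1}, the matrices D and W(β,γ,l) commute: D·W(β,γ,l) = W(β,γ,l)·D. (The symmetry of the performance operator underlying Lemma 1 of the paper.) -/
open Matrix Kronecker Complex Filter
open scoped ComplexOrder

noncomputable section

/-- Pauli `σx`. -/
def pX : Matrix (Fin 2) (Fin 2) ℂ := !![0, 1; 1, 0]

/-- `σ⁽⁰⁾ = I`, `σ⁽¹⁾ = σx`. -/
def sigma (l : Fin 2) : Matrix (Fin 2) (Fin 2) ℂ := if l = 0 then 1 else pX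

/-- `Z(β,γ) = diag(e^{iβ}, e^{iγ})`. -/
def Zm (β γ : ℝ) : Matrix (Fin 2) (Fin 2) ℂ :=
  !![Complex.exp (Complex.I * β), 0; 0, Complex.exp (Complex.I * γ)]

/-- The symmetry representation `W(β,γ,l) = σ⁽ˡ⁾ ⊗ₖ (σ⁽ˡ⁾Z(β,γ)) ⊗ₖ (σ⁽ˡ⁾ conj(Z(β,γ)))`. -/
def Wm (β γ : ℝ) (l : Fin 2) :
    Matrix (Fin 2 × Fin 2 × Fin 2) (Fin 2 × Fin 2 × Fin 2) ℂ :=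
  (sigma l) ⊗ₖ (((sigma l) * Zm β γ) ⊗ₖ ((sigma l) * (Zm β γ).map (starRingEnd ℂ)))


lemma outer_smul {ι : Type*} [Fintype ι] (c : ℂ) (v : ι → ℂ) :
    outer (c • v) = (c * star c) • outer v := by
  ext i j
  simp [outer, Matrix.vecMulVec_apply]
  ring

lemma pX_outer_swap (n : ℕ) (α : ℝ) :
    outer (psiStar n α 0) * pX = pX * outer (psiStar n α 1) ∧
    outer (psiStar n α 1) * pX = pX * outer (psiStar n α 0) := by
  constructor <;>
  · ext i j
    fin_cases i <;> fin_cases j <;>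
    · simp only [outer, Matrix.mul_apply, Matrix.vecMulVec_apply]
      simp [outer, psiStar, pX, Matrix.mul_apply, Fin.sum_univ_two,
        Matrix.vecMulVec_apply, Matrix.vecMul, Matrix.map_apply, dotProduct, Complex.star_def, ← Complex.exp_conj, _root_.map_mul,
        Complex.conj_I, Complex.conj_ofReal, ← Complex.exp_add] <;> ring_nf

lemma Ui_commute_Z (α β γ : ℝ) (i : Fin 2) :
    outer (Ui α i) * ((Zm β γ) ⊗ₖ ((Zm β γ).map (starRingEnd ℂ))) =
      ((Zm β γ) ⊗ₖ ((Zm β γ).map (starRingEnd ℂ))) * outer (Ui α i) := by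
  fin_cases i <;>
  · ext ⟨a,b⟩ ⟨c,d⟩
    fin_cases a <;> fin_cases b <;> fin_cases c <;> fin_cases d <;>
    · simp [outer, Ui, Uket, Zm, Matrix.mul_apply, Fintype.sum_prod_type,
        Fin.sum_univ_two, Matrix.vecMulVec_apply, Matrix.vecMul, Matrix.map_apply, dotProduct, Complex.star_def,
        ← Complex.exp_conj, _root_.map_mul, Complex.conj_I, Complex.conj_ofReal,
        ← Complex.exp_add] <;> ring_nf

lemma pXZ (β γ : ℝ) : pX * Zm β γ =
    !![0, Complex.exp (Complex.I * γ); Complex.exp (Complex.I * β), 0] := by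
  ext i j
  fin_cases i <;> fin_cases j <;>
    simp [pX, Zm, Matrix.mul_apply, Fin.sum_univ_two]

lemma pXZc (β γ : ℝ) : pX * (Zm β γ).map (starRingEnd ℂ) =
    !![0, Complex.exp (-(Complex.I * γ)); Complex.exp (-(Complex.I * β)), 0] := by
  ext i j
  fin_cases i <;> fin_cases j <;>
    simp [pX, Zm, Matrix.mul_apply, Fin.sum_univ_two, Matrix.map_apply,
      ← Complex.exp_conj, _root_.map_mul, Complex.conj_I, Complex.conj_ofReal]

lemma Ui_swap_W (α β γ : ℝ) :
    (outer (Ui α 0) * ((pX * Zm β γ) ⊗ₖ (pX * (Zm β γ).map (starRingEnd ℂ))) =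
      ((pX * Zm β γ) ⊗ₖ (pX * (Zm β γ).map (starRingEnd ℂ))) * outer (Ui α 1)) ∧
    (outer (Ui α 1) * ((pX * Zm β γ) ⊗ₖ (pX * (Zm β γ).map (starRingEnd ℂ))) =
      ((pX * Zm β γ) ⊗ₖ (pX * (Zm β γ).map (starRingEnd ℂ))) * outer (Ui α 0)) := by
  rw [pXZ, pXZc]
  constructor <;>
  · ext ⟨a,b⟩ ⟨c,d⟩
    fin_cases a <;> fin_cases b <;> fin_cases c <;> fin_cases d <;>
    · simp [outer, Ui, Uket, Matrix.mul_apply, Fintype.sum_prod_type,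
        Fin.sum_univ_two, Matrix.vecMulVec_apply, Matrix.vecMul, Matrix.map_apply, dotProduct, Complex.star_def,
        ← Complex.exp_conj, _root_.map_mul, Complex.conj_I, Complex.conj_ofReal,
        ← Complex.exp_add] <;> ring_nf

theorem performance_operator_commutes (n : ℕ) (hn : 1 ≤ n) (α : ℝ) (hα : 0 < α)
    (hdist : 4 * n * α < Real.pi) (β γ : ℝ) (l : Fin 2) :
    Dop n α * Wm β γ l = Wm β γ l * Dop n α := by
  obtain ⟨hp0, hp1⟩ := pX_outer_swap n α
  obtain ⟨hu0, hu1⟩ := Ui_swap_W α β γ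
  fin_cases l <;>
    simp only [Dop, Wm, sigma, Fin.zero_eta, Fin.mk_one, Fin.isValue, one_ne_zero,
      reduceIte, Fin.sum_univ_two, smul_mul_assoc, mul_smul_comm, add_mul, mul_add,
      Matrix.mul_kronecker_mul, Matrix.one_mul, Matrix.mul_one]
  · simp only [← Matrix.mul_kronecker_mul, Matrix.mul_one, Matrix.one_mul,
      Ui_commute_Z α β γ]
  · simp only [← Matrix.mul_kronecker_mul, hp0, hp1, hu0, hu1]
    rw [add_comm]
end
end

section
/- Let R be an 8×8 complex matrix (indexed by Fin 2 × Fin 2 × Fin 2) such that R·W(β,γ,l) = W(β,γ,l)·R for all β, γ ∈ ℝ and l ∈ {0,1}, and suppose there exist real numbers λ₀, λ₁ with ⟨ψ*ᵢ|R|ψ*ᵢ⟩ = λᵢ·|Uᵢ⟩⟩⟨⟨Uᵢ| for i = 0,1. Then λ₀ = λ₁. (Second claim of Lemma 1 of the paper: for a symmetric retriever the two retrieval probabilities coincide.) -/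
open Matrix Kronecker Complex Filter
open scoped ComplexOrder

noncomputable section

/-- Partial sandwich `⟨w|R|w⟩` over the first (memory) factor `H₀`. -/
def sand (w : Fin 2 → ℂ)
    (R : Matrix (Fin 2 × Fin 2 × Fin 2) (Fin 2 × Fin 2 × Fin 2) ℂ) :
    Matrix (Fin 2 × Fin 2) (Fin 2 × Fin 2) ℂ :=
  Matrix.of fun p q => ∑ a : Fin 2, ∑ a' : Fin 2,
    (starRingEnd ℂ) (w a) * R (a, p.1, p.2) (a', q.1, q.2) * w a'

theorem symmetric_retriever_equal_probabilities (n : ℕ) (hn : 1 ≤ n) (α : ℝ) (hα : 0 < α)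
    (hdist : 4 * n * α < Real.pi)
    (R : Matrix (Fin 2 × Fin 2 × Fin 2) (Fin 2 × Fin 2 × Fin 2) ℂ)
    (hcomm : ∀ (β γ : ℝ) (l : Fin 2), R * Wm β γ l = Wm β γ l * R)
    (lam0 lam1 : ℝ)
    (h0 : sand (psiStar n α 0) R = (lam0 : ℂ) • outer (Ui α 0))
    (h1 : sand (psiStar n α 1) R = (lam1 : ℂ) • outer (Ui α 1)) :
    lam0 = lam1 := by
  classical
  have hW := hcomm 0 0 1
  have key : ∀ i j : Fin 2 × Fin 2 × Fin 2,
      (R * Wm 0 0 1) i j = (Wm 0 0 1 * R) i j := fun i j =>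
    congrFun (congrFun hW i) j
  have e1 : R (0,0,0) (0,0,0) = R (1,1,1) (1,1,1) := by
    have h := key (0,0,0) (1,1,1)
    simpa [Wm, Matrix.mul_apply, Fintype.sum_prod_type, Fin.sum_univ_two, sigma, pX, Zm,
      Matrix.kroneckerMap_apply, Matrix.one_apply, Matrix.vecMul, dotProduct, Matrix.map_apply] using h
  have e2 : R (0,0,0) (1,0,0) = R (1,1,1) (0,1,1) := by
    have h := key (0,0,0) (0,1,1)
    simpa [Wm, Matrix.mul_apply, Fintype.sum_prod_type, Fin.sum_univ_two, sigma, pX, Zm,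
      Matrix.kroneckerMap_apply, Matrix.one_apply, Matrix.vecMul, dotProduct, Matrix.map_apply] using h
  have e3 : R (1,0,0) (0,0,0) = R (0,1,1) (1,1,1) := by
    have h := key (1,0,0) (1,1,1)
    simpa [Wm, Matrix.mul_apply, Fintype.sum_prod_type, Fin.sum_univ_two, sigma, pX, Zm,
      Matrix.kroneckerMap_apply, Matrix.one_apply, Matrix.vecMul, dotProduct, Matrix.map_apply] using h
  have e4 : R (1,0,0) (1,0,0) = R (0,1,1) (0,1,1) := by
    have h := key (1,0,0) (0,1,1)
    simpa [Wm, Matrix.mul_apply, Fintype.sum_prod_type, Fin.sum_univ_two, sigma, pX, Zm,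
      Matrix.kroneckerMap_apply, Matrix.one_apply, Matrix.vecMul, dotProduct, Matrix.map_apply] using h
  have s0 := congrFun (congrFun h0 (1,1)) (1,1)
  have s1 := congrFun (congrFun h1 (0,0)) (0,0)
  simp [sand, outer, psiStar, Ui, Uket, Fin.sum_univ_two, Matrix.vecMulVec_apply,
    Matrix.smul_apply] at s0 s1
  have hone : Complex.exp (-(Complex.I*α)) * (starRingEnd ℂ) (Complex.exp (-(Complex.I*α))) = 1 := by
    rw [← Complex.exp_conj, ← Complex.exp_add]; simp
  rw [hone, mul_one] at s0 s1
  set c : ℂ := ((Real.sqrt 2 : ℂ))⁻¹ with hc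
  set ep : ℂ := Complex.exp (Complex.I * n * α) with hep
  set em : ℂ := Complex.exp (-(Complex.I * n * α)) with hem
  have hC : (lam0 : ℂ) = (lam1 : ℂ) := by
    linear_combination (-1 : ℂ) * s0 + s1
      - (c * (starRingEnd ℂ) ep * c * ep) * e1
      - (c * (starRingEnd ℂ) ep * c * em) * e2
      - (c * (starRingEnd ℂ) em * c * ep) * e3
      - (c * (starRingEnd ℂ) em * c * em) * e4
  exact_mod_cast hC
end
end

section
/- Let R be an 8×8 PSD matrix such that R·W(β,γ,l) = W(β,γ,l)·R for all β, γ ∈ ℝ and l ∈ {0,1}, and suppose there exist λ₀, λ₁ ≥ 0 with ⟨ψ*ᵢ|R|ψ*ᵢ⟩ = λᵢ·|Uᵢ⟩⟩⟨⟨Uᵢ| for i = 0,1. Then R = P·R·P + P′·R·P′. (Lemma 2 of the paper for the perfect probabilistic case: the optimal retriever is block diagonal, i.e. Q·R·Q = 0.) -/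
open Matrix Kronecker Complex Filter
open scoped ComplexOrder

noncomputable section

/-- Tensor product of a vector in `ℂ²` with a vector in `ℂ^{Fin 2 × Fin 2}`. -/
def tv (v : Fin 2 → ℂ) (w : Fin 2 × Fin 2 → ℂ) : Fin 2 × Fin 2 × Fin 2 → ℂ :=
  fun p => v p.1 * w p.2

/-- `|+⟩ = (1,1)/√2`. -/
def plusV : Fin 2 → ℂ := ((Real.sqrt 2 : ℂ))⁻¹ • ![1, 1]

/-- `|−⟩ = (1,−1)/√2`. -/
def minusV : Fin 2 → ℂ := ((Real.sqrt 2 : ℂ))⁻¹ • ![1, -1]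

/-- `|I⟩⟩ = (1,0,0,1)`. -/
def Iket : Fin 2 × Fin 2 → ℂ := fun p =>
  if p = (0, 0) then 1 else if p = (1, 1) then 1 else 0

/-- `|σz⟩⟩ = (1,0,0,−1)`. -/
def Zket : Fin 2 × Fin 2 → ℂ := fun p =>
  if p = (0, 0) then 1 else if p = (1, 1) then -1 else 0

/-- `e₁ = |+⟩⊗|I⟩⟩`, `e₂ = |−⟩⊗|σz⟩⟩`. -/
def eV (i : Fin 2) : Fin 2 × Fin 2 × Fin 2 → ℂ :=
  if i = 0 then tv plusV Iket else tv minusV Zket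

/-- `e₁′ = |+⟩⊗|σz⟩⟩`, `e₂′ = |−⟩⊗|I⟩⟩`. -/
def eV' (i : Fin 2) : Fin 2 × Fin 2 × Fin 2 → ℂ :=
  if i = 0 then tv plusV Zket else tv minusV Iket

/-- The projection `P = (1/2)(e₁e₁ᴴ + e₂e₂ᴴ)`. -/
def Pproj : Matrix (Fin 2 × Fin 2 × Fin 2) (Fin 2 × Fin 2 × Fin 2) ℂ :=
  (1/2 : ℂ) • (Matrix.vecMulVec (eV 0) (star (eV 0)) + Matrix.vecMulVec (eV 1) (star (eV 1)))

/-- The projection `P′ = (1/2)(e₁′(e₁′)ᴴ + e₂′(e₂′)ᴴ)`. -/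
def Pproj' : Matrix (Fin 2 × Fin 2 × Fin 2) (Fin 2 × Fin 2 × Fin 2) ℂ :=
  (1/2 : ℂ) • (Matrix.vecMulVec (eV' 0) (star (eV' 0)) + Matrix.vecMulVec (eV' 1) (star (eV' 1)))


-- ===== auxiliary material =====

lemma s2aux : ((Real.sqrt 2 : ℂ))⁻¹ * ((Real.sqrt 2 : ℂ))⁻¹ = 1/2 := by
  rw [← mul_inv, ← Complex.ofReal_mul, Real.mul_self_sqrt (by norm_num)]
  norm_num

lemma vv_tv (v : Fin 2 → ℂ) (w : Fin 2 × Fin 2 → ℂ) :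
    Matrix.vecMulVec (tv v w) (star (tv v w)) =
      (Matrix.vecMulVec v (star v)) ⊗ₖ (Matrix.vecMulVec w (star w)) := by
  ext ⟨a, p⟩ ⟨a', p'⟩
  simp [Matrix.vecMulVec_apply, Matrix.kroneckerMap_apply, tv, Pi.star_apply]
  ring

/-- diagonal projector onto `b = c` in the second 4-dim factor -/
def Dm : Matrix (Fin 2 × Fin 2) (Fin 2 × Fin 2) ℂ :=
  Matrix.diagonal (fun p => if p.1 = p.2 then 1 else 0)

def Fm : Matrix (Fin 2 × Fin 2) (Fin 2 × Fin 2) ℂ :=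
  Matrix.of fun p q => if p.1 = p.2 ∧ q.1 = q.2 ∧ p.1 ≠ q.1 then 1 else 0

/-- the big diagonal projector `Q` -/
def Qd : Matrix (Fin 2 × Fin 2 × Fin 2) (Fin 2 × Fin 2 × Fin 2) ℂ :=
  (1 : Matrix (Fin 2) (Fin 2) ℂ) ⊗ₖ Dm

lemma hA_sum : Matrix.vecMulVec plusV (star plusV) + Matrix.vecMulVec minusV (star minusV) = 1 := by
  ext a a'
  rw [Matrix.add_apply, Matrix.vecMulVec_apply, Matrix.vecMulVec_apply]
  fin_cases a <;> fin_cases a' <;>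
    simp [Matrix.vecMulVec_apply, plusV, minusV, Matrix.one_apply, Pi.star_apply, s2aux] <;>
    ring_nf

lemma hA_dif : Matrix.vecMulVec plusV (star plusV) - Matrix.vecMulVec minusV (star minusV) = pX := by
  ext a a'
  rw [Matrix.sub_apply, Matrix.vecMulVec_apply, Matrix.vecMulVec_apply]
  fin_cases a <;> fin_cases a' <;>
    simp [Matrix.vecMulVec_apply, plusV, minusV, pX, Pi.star_apply, s2aux] <;>
    ring_nf

lemma hB_sum : Matrix.vecMulVec Iket (star Iket) + Matrix.vecMulVec Zket (star Zket)
    = (2:ℂ) • Dm := by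
  ext ⟨b, c⟩ ⟨b', c'⟩
  fin_cases b <;> fin_cases c <;> fin_cases b' <;> fin_cases c' <;>
    simp [Matrix.vecMulVec_apply, Iket, Zket, Dm, Matrix.diagonal, Pi.star_apply, Prod.ext_iff] <;>
    norm_num

lemma hB_dif : Matrix.vecMulVec Iket (star Iket) - Matrix.vecMulVec Zket (star Zket)
    = (2:ℂ) • Fm := by
  ext ⟨b, c⟩ ⟨b', c'⟩
  fin_cases b <;> fin_cases c <;> fin_cases b' <;> fin_cases c' <;>
    simp [Matrix.vecMulVec_apply, Iket, Zket, Fm, Pi.star_apply, Prod.ext_iff] <;>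
    norm_num

lemma hDXD : Dm * (pX ⊗ₖ pX) * Dm = Fm := by
  ext ⟨b, c⟩ ⟨b', c'⟩
  fin_cases b <;> fin_cases c <;> fin_cases b' <;> fin_cases c' <;>
    simp [Matrix.mul_apply, Dm, Fm, pX, Matrix.diagonal, Fintype.sum_prod_type,
      Fin.sum_univ_two, Matrix.kroneckerMap_apply, Prod.ext_iff]

lemma pX2 : pX * pX = 1 := by
  ext i j
  fin_cases i <;> fin_cases j <;> simp [pX, Matrix.mul_apply, Fin.sum_univ_two, Matrix.one_apply]

lemma Zm00 : Zm 0 0 = 1 := by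
  ext i j
  fin_cases i <;> fin_cases j <;> simp [Zm, Matrix.one_apply]

lemma Wm001 : Wm 0 0 1 = pX ⊗ₖ (pX ⊗ₖ pX) := by
  have : (Zm 0 0).map (starRingEnd ℂ) = 1 := by
    rw [Zm00]; ext i j; simp [Matrix.one_apply, Matrix.map_apply, apply_ite]
  simp [Wm, sigma, Zm00, this]

lemma hW2 : Wm 0 0 1 * Wm 0 0 1 = 1 := by
  rw [Wm001, ← Matrix.mul_kronecker_mul, ← Matrix.mul_kronecker_mul, pX2,
    Matrix.one_kronecker_one, Matrix.one_kronecker_one]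

lemma eV_0 : eV 0 = tv plusV Iket := rfl
lemma eV_1 : eV 1 = tv minusV Zket := rfl
lemma eV'_0 : eV' 0 = tv plusV Zket := rfl
lemma eV'_1 : eV' 1 = tv minusV Iket := rfl

lemma kron_sum (P M : Matrix (Fin 2) (Fin 2) ℂ) (X Y : Matrix (Fin 2 × Fin 2) (Fin 2 × Fin 2) ℂ) :
    (1/2:ℂ) • (P ⊗ₖ X + M ⊗ₖ Y) + (1/2:ℂ) • (P ⊗ₖ Y + M ⊗ₖ X)
      = (1/2:ℂ) • ((P + M) ⊗ₖ (X + Y)) := by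
  ext ⟨a, p⟩ ⟨a', p'⟩
  simp [Matrix.kroneckerMap_apply, Matrix.add_apply, Matrix.smul_apply]
  ring

lemma kron_dif (P M : Matrix (Fin 2) (Fin 2) ℂ) (X Y : Matrix (Fin 2 × Fin 2) (Fin 2 × Fin 2) ℂ) :
    (1/2:ℂ) • (P ⊗ₖ X + M ⊗ₖ Y) - (1/2:ℂ) • (P ⊗ₖ Y + M ⊗ₖ X)
      = (1/2:ℂ) • ((P - M) ⊗ₖ (X - Y)) := by
  ext ⟨a, p⟩ ⟨a', p'⟩
  simp [Matrix.kroneckerMap_apply, Matrix.add_apply, Matrix.sub_apply, Matrix.smul_apply]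
  ring

lemma hPsum : Pproj + Pproj' = Qd := by
  rw [Pproj, Pproj', eV_0, eV_1, eV'_0, eV'_1, Qd]
  rw [vv_tv, vv_tv, vv_tv, vv_tv, kron_sum, hA_sum, hB_sum, Matrix.kronecker_smul,
    smul_smul]
  norm_num

lemma hPdif : Pproj - Pproj' = Qd * Wm 0 0 1 * Qd := by
  rw [Pproj, Pproj', eV_0, eV_1, eV'_0, eV'_1, Qd, Wm001]
  rw [vv_tv, vv_tv, vv_tv, vv_tv, kron_dif, hA_dif, hB_dif, Matrix.kronecker_smul, smul_smul]
  rw [← Matrix.mul_kronecker_mul, ← Matrix.mul_kronecker_mul, Matrix.one_mul, Matrix.mul_one, hDXD]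
  norm_num

lemma exp4_ne_one (n : ℕ) (hn : 1 ≤ n) (α : ℝ) (hα : 0 < α) (hdist : 4 * n * α < Real.pi) :
    Complex.exp (Complex.I * n * α) ^ 4 ≠ 1 := by
  rw [← Complex.exp_nat_mul]
  intro h
  obtain ⟨k, hk⟩ := Complex.exp_eq_one_iff.mp h
  have hI : ((4 * n * α : ℝ) : ℂ) * Complex.I = ((k : ℝ) * (2 * Real.pi) : ℝ) * Complex.I := by
    push_cast
    push_cast at hk
    linear_combination hk
  have hre : (4 * n * α : ℝ) = (k : ℝ) * (2 * Real.pi) := by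
    have := mul_right_cancel₀ Complex.I_ne_zero hI
    exact_mod_cast this
  have hpos : 0 < 4 * (n:ℝ) * α := by positivity
  have hπ : 0 < Real.pi := Real.pi_pos
  rcases le_or_gt k 0 with hk0 | hk0
  · have : (k : ℝ) * (2 * Real.pi) ≤ 0 := by
      apply mul_nonpos_of_nonpos_of_nonneg
      · exact_mod_cast hk0
      · positivity
    linarith
  · have hk1 : (1 : ℝ) ≤ (k : ℝ) := by exact_mod_cast hk0
    have : 2 * Real.pi ≤ (k : ℝ) * (2 * Real.pi) := by nlinarith
    linarith

theorem block_diagonal_retriever (n : ℕ) (hn : 1 ≤ n) (α : ℝ) (hα : 0 < α)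
    (hdist : 4 * n * α < Real.pi)
    (R : Matrix (Fin 2 × Fin 2 × Fin 2) (Fin 2 × Fin 2 × Fin 2) ℂ)
    (hR : R.PosSemidef)
    (hcomm : ∀ (β γ : ℝ) (l : Fin 2), R * Wm β γ l = Wm β γ l * R)
    (lam0 lam1 : ℝ) (h0nn : 0 ≤ lam0) (h1nn : 0 ≤ lam1)
    (h0 : sand (psiStar n α 0) R = (lam0 : ℂ) • outer (Ui α 0))
    (h1 : sand (psiStar n α 1) R = (lam1 : ℂ) • outer (Ui α 1)) :
    R = Pproj * R * Pproj + Pproj' * R * Pproj' := by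
  classical
  set W : Matrix (Fin 2 × Fin 2 × Fin 2) (Fin 2 × Fin 2 × Fin 2) ℂ := Wm 0 0 1 with hWdef
  set u : ℂ := Complex.exp (Complex.I * n * α) with hu_def
  set v : ℂ := Complex.exp (-(Complex.I * n * α)) with hv_def
  set t : ℂ := ((Real.sqrt 2 : ℝ) : ℂ)⁻¹ with ht_def
  have hu : u ≠ 0 := Complex.exp_ne_zero _
  have hv : v ≠ 0 := Complex.exp_ne_zero _
  have huv : u * v = 1 := by
    rw [hu_def, hv_def, ← Complex.exp_add]
    simp
  have h4 : u ^ 4 ≠ 1 := exp4_ne_one n hn α hα hdist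
  have ht0 : t ≠ 0 := by
    rw [ht_def]
    simp [Real.sqrt_eq_zero']
  -- the quadratic form of a localized test vector equals a `sand` entry
  have quad : ∀ (w : Fin 2 → ℂ) (bc : Fin 2 × Fin 2),
      star (fun p : Fin 2 × Fin 2 × Fin 2 => if p.2 = bc then w p.1 else 0) ⬝ᵥ
        R *ᵥ (fun p : Fin 2 × Fin 2 × Fin 2 => if p.2 = bc then w p.1 else 0)
        = sand w R bc bc := by
    intro w bc
    obtain ⟨b0, c0⟩ := bc
    simp only [dotProduct, Matrix.mulVec, dotProduct, Pi.star_apply,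
      Fintype.sum_prod_type, sand, Matrix.of_apply, apply_ite (star : ℂ → ℂ), star_zero,
      Prod.mk.injEq, ite_and, ite_mul, mul_ite, zero_mul, mul_zero, Finset.sum_ite_eq,
      Finset.sum_ite_eq', Finset.mem_univ, if_true]
    simp only [RCLike.star_def, Finset.mul_sum, mul_assoc]
  -- columns of R with unequal (b, c) vanish
  have hcol : ∀ (x : Fin 2 × Fin 2 × Fin 2) (a' b c : Fin 2), b ≠ c → R x (a', b, c) = 0 := by
    intro x a' b c hbc
    have key : ∀ i : Fin 2,
        R *ᵥ (fun p : Fin 2 × Fin 2 × Fin 2 => if p.2 = (b, c) then psiStar n α i p.1 else 0)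
          = 0 := by
      intro i
      apply (hR.dotProduct_mulVec_zero_iff _).mp
      rw [quad]
      have hU0 : ∀ ε : ℝ, Uket ε (b, c) = 0 := by
        intro ε
        rw [Uket]
        rw [if_neg, if_neg]
        · simp only [Prod.mk.injEq, not_and]
          intro h1' h2'
          exact hbc (h1'.trans h2'.symm)
        · simp only [Prod.mk.injEq, not_and]
          intro h1' h2'
          exact hbc (h1'.trans h2'.symm)
      fin_cases i
      · rw [show psiStar n α ⟨0, by norm_num⟩ = psiStar n α 0 from rfl, h0]
        simp [outer, Ui, Matrix.smul_apply, Matrix.vecMulVec_apply, hU0]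
      · rw [show psiStar n α ⟨1, by norm_num⟩ = psiStar n α 1 from rfl, h1]
        simp [outer, Ui, Matrix.smul_apply, Matrix.vecMulVec_apply, hU0]
    have ev : ∀ i : Fin 2,
        R x (0, b, c) * psiStar n α i 0 + R x (1, b, c) * psiStar n α i 1 = 0 := by
      intro i
      have hkx := congrFun (key i) x
      simpa [Matrix.mulVec, dotProduct, Fintype.sum_prod_type, Prod.mk.injEq, ite_and,
        mul_ite, mul_zero, Finset.sum_ite_eq, Finset.sum_ite_eq', Fin.sum_univ_two] using hkx
    have e0 := ev 0
    have e1 := ev 1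
    simp only [psiStar, if_pos rfl, if_true, ite_true, Pi.smul_apply, smul_eq_mul,
      Matrix.cons_val_zero, Matrix.cons_val_one, Matrix.head_cons,
      show ((1:Fin 2) = 0) = False by simp, if_false, ← hu_def, ← hv_def, ← ht_def] at e0 e1
    set r0 : ℂ := R x (0, b, c) with hr0d
    set r1 : ℂ := R x (1, b, c) with hr1d
    have hA : r1 * (t * (u ^ 2 - v ^ 2)) = 0 := by linear_combination u * e0 - v * e1
    have hB : r1 * (t * (u ^ 4 - 1)) = 0 := by
      linear_combination u ^ 2 * hA + (r1 * t * (u * v + 1)) * huv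
    have hr1 : r1 = 0 := by
      rcases mul_eq_zero.mp hB with h | h
      · exact h
      · rcases mul_eq_zero.mp h with h' | h'
        · exact absurd h' ht0
        · exact absurd (sub_eq_zero.mp h') h4
    have hr0 : r0 = 0 := by
      have hC : r0 * (t * v) = 0 := by linear_combination e0 - (t * u) * hr1
      rcases mul_eq_zero.mp hC with h | h
      · exact h
      · rcases mul_eq_zero.mp h with h' | h'
        · exact absurd h' ht0
        · exact absurd h' hv
    fin_cases a'
    · exact hr0
    · exact hr1
  -- entries of R with unequal (b, c) on either side vanish
  have hzero : ∀ (x y : Fin 2 × Fin 2 × Fin 2),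
      x.2.1 ≠ x.2.2 ∨ y.2.1 ≠ y.2.2 → R x y = 0 := by
    rintro ⟨a, b, c⟩ ⟨a', b', c'⟩ (h | h)
    · have herm : R (a, b, c) (a', b', c') =
          (starRingEnd ℂ) (R (a', b', c') (a, b, c)) := by
        conv_lhs => rw [← hR.1]
        rfl
      rw [herm, hcol _ _ _ _ h, map_zero]
    · exact hcol _ _ _ _ h
  -- Q is the diagonal projector
  have hQdiag : Qd = Matrix.diagonal
      (fun p : Fin 2 × Fin 2 × Fin 2 => if p.2.1 = p.2.2 then 1 else 0) := by
    ext ⟨a, p⟩ ⟨a', p'⟩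
    simp only [Qd, Dm, Matrix.kroneckerMap_apply, Matrix.one_apply, Matrix.diagonal_apply,
      Prod.mk.injEq]
    split_ifs with h1' h2' h3' <;> simp_all <;> tauto
  have hQRQ : Qd * R * Qd = R := by
    rw [hQdiag]
    ext x y
    rw [Matrix.mul_diagonal, Matrix.diagonal_mul]
    by_cases hx : x.2.1 = x.2.2
    · by_cases hy : y.2.1 = y.2.2
      · simp [hx, hy]
      · rw [hzero x y (Or.inr hy)]
        simp
    · rw [hzero x y (Or.inl hx)]
      simp
  -- SRS = R
  have hWR : W * R = R * W := (hcomm 0 0 1).symm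
  have hS : (Qd * W * Qd) * R * (Qd * W * Qd) = R := by
    calc (Qd * W * Qd) * R * (Qd * W * Qd) = Qd * (W * (Qd * R * Qd) * W) * Qd := by
          noncomm_ring
    _ = Qd * (W * R * W) * Qd := by rw [hQRQ]
    _ = Qd * (R * W * W) * Qd := by rw [hWR]
    _ = Qd * (R * (W * W)) * Qd := by rw [mul_assoc R W W]
    _ = Qd * R * Qd := by rw [hWdef, hW2, mul_one]
    _ = R := hQRQ
  -- conclude
  have expand : (Pproj + Pproj') * R * (Pproj + Pproj')
        + (Pproj - Pproj') * R * (Pproj - Pproj')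
      = (Pproj * R * Pproj + Pproj' * R * Pproj')
        + (Pproj * R * Pproj + Pproj' * R * Pproj') := by
    noncomm_ring
  rw [hPsum, hPdif, ← hWdef, hQRQ, hS] at expand
  have h2 : (2:ℂ) • (Pproj * R * Pproj + Pproj' * R * Pproj') = (2:ℂ) • R := by
    rw [two_smul, two_smul]
    exact expand.symm
  have := smul_right_injective (Matrix (Fin 2 × Fin 2 × Fin 2) (Fin 2 × Fin 2 × Fin 2) ℂ)
    (two_ne_zero (α := ℂ)) h2
  exact this.symm
end
end

section
/- The value 1/2 + (1/2)·√(1 − (sin(2α)·cos(2nα))²) is the greatest element of the set {x : ℝ | ∃ a b : ℝ, a² + b² = 1 ∧ x = (a·cₙ·c + b·sₙ·s)² + (a·sₙ·c + b·cₙ·s)²}. (Appendix B of the paper: the optimal approximate deterministic fidelity is attained by a measure-and-prepare strategy parametrised by real a, b with a² + b² = 1.) -/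
open Matrix Kronecker Complex Filter
open scoped ComplexOrder

set_option maxHeartbeats 800000

noncomputable section

theorem aux (p q X Y Z : ℝ) (h1 : p^2 + q^2 = 1) (h2 : Z^2 = X^2 + Y^2)
    (h3 : 0 ≤ Z) : p*X + q*Y ≤ Z := by
  nlinarith [sq_nonneg (p*Y - q*X), sq_nonneg (p*X + q*Y + Z)]

theorem measure_and_prepare_optimal (n : ℕ) (hn : 1 ≤ n) (α : ℝ) (hα : 0 < α)
    (hdist : 4 * n * α < Real.pi) :
    IsGreatest
      {x : ℝ | ∃ a b : ℝ, a ^ 2 + b ^ 2 = 1 ∧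
        x = (a * Real.cos (n * α) * Real.cos α + b * Real.sin (n * α) * Real.sin α) ^ 2
          + (a * Real.sin (n * α) * Real.cos α + b * Real.cos (n * α) * Real.sin α) ^ 2}
      (1 / 2 + (1 / 2) * Real.sqrt (1 - (Real.sin (2 * α) * Real.cos (2 * n * α)) ^ 2)) := by
  set C := Real.cos (2 * α) with hCdef
  set S := Real.sin (2 * α) * Real.sin (2 * n * α) with hSdef
  set K := Real.sin (2 * α) * Real.cos (2 * n * α) with hKdef
  have hn1 : (1 : ℝ) ≤ n := by exact_mod_cast hn
  have h4α : 4 * α < Real.pi := by nlinarith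
  have hC : 0 < C := by
    apply Real.cos_pos_of_mem_Ioo
    constructor <;> [nlinarith [Real.pi_pos]; nlinarith]
  have hpyth1 : Real.sin (2*α) ^ 2 + Real.cos (2*α) ^ 2 = 1 := Real.sin_sq_add_cos_sq _
  have hpyth2 : Real.sin (2*n*α) ^ 2 + Real.cos (2*n*α) ^ 2 = 1 := Real.sin_sq_add_cos_sq _
  have hCS : C ^ 2 + S ^ 2 = 1 - K ^ 2 := by
    simp only [hCdef, hSdef, hKdef]; nlinarith
  set R := Real.sqrt (1 - K ^ 2) with hRdef
  have hR2 : R ^ 2 = C ^ 2 + S ^ 2 := by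
    rw [hRdef, Real.sq_sqrt (by nlinarith)]; linarith
  have hRpos : 0 < R := by
    rw [hRdef]; apply Real.sqrt_pos.mpr; nlinarith
  -- double angle identities
  have hsin2 : Real.sin (2*α) = 2 * Real.sin α * Real.cos α := Real.sin_two_mul α
  have hcos2 : C = Real.cos α ^ 2 - Real.sin α ^ 2 := Real.cos_two_mul' α
  have hsin2n : Real.sin (2*n*α) = 2 * Real.sin (n*α) * Real.cos (n*α) := by
    rw [show (2*n*α : ℝ) = 2 * (n*α) by ring]; exact Real.sin_two_mul _
  have hS4 : S = 4 * Real.sin α * Real.cos α * Real.sin (n*α) * Real.cos (n*α) := by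
    rw [hSdef, hsin2, hsin2n]; ring
  have hpythn : Real.sin (n*α) ^ 2 + Real.cos (n*α) ^ 2 = 1 := Real.sin_sq_add_cos_sq _
  have hpytha : Real.sin α ^ 2 + Real.cos α ^ 2 = 1 := Real.sin_sq_add_cos_sq _
  have key : ∀ a b : ℝ, a ^ 2 + b ^ 2 = 1 →
      (a * Real.cos (n*α) * Real.cos α + b * Real.sin (n*α) * Real.sin α) ^ 2
        + (a * Real.sin (n*α) * Real.cos α + b * Real.cos (n*α) * Real.sin α) ^ 2
      = 1/2 + ((a^2 - b^2) * C + (2*b*a) * S) / 2 := by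
    intro a b hab
    rw [hcos2, hS4]
    linear_combination (a^2 * Real.cos α ^ 2 + b^2 * Real.sin α ^ 2) * hpythn
      + ((Real.cos α ^ 2 + Real.sin α ^ 2)/2) * hab + (1/2) * hpytha
  constructor
  · -- membership: the max is attained
    set t := S / C with htdef
    have h1t : 1 + t ^ 2 = (R / C) ^ 2 := by
      rw [htdef]; field_simp; linarith [hR2]
    have hsq : Real.sqrt (1 + t ^ 2) = R / C := by
      rw [h1t]; exact Real.sqrt_sq (by positivity)
    have hcosφ : Real.cos (Real.arctan t) = C / R := by
      rw [Real.cos_arctan, hsq, one_div, inv_div]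
    have hsinφ : Real.sin (Real.arctan t) = S / R := by
      rw [Real.sin_arctan, hsq, htdef]; field_simp
    set a := Real.cos (Real.arctan t / 2) with hadef
    set b := Real.sin (Real.arctan t / 2) with hbdef
    have hab : a ^ 2 + b ^ 2 = 1 := by
      rw [hadef, hbdef, add_comm]; exact Real.sin_sq_add_cos_sq _
    have hcosd : a ^ 2 - b ^ 2 = C / R := by
      rw [← hcosφ, show Real.arctan t = 2 * (Real.arctan t / 2) by ring,
        Real.cos_two_mul']
    have hsind : 2 * b * a = S / R := by
      rw [← hsinφ, show Real.arctan t = 2 * (Real.arctan t / 2) by ring,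
        Real.sin_two_mul]
    refine ⟨a, b, hab, ?_⟩
    rw [key a b hab, hcosd, hsind]
    field_simp
    linarith [hR2]
  · -- upper bound
    rintro x ⟨a, b, hab, rfl⟩
    rw [key a b hab]
    have hpq : (a^2 - b^2)^2 + (2*b*a)^2 = 1 := by linear_combination (a^2 + b^2 + 1) * hab
    have hcauchy : (a^2 - b^2) * C + (2*b*a) * S ≤ R :=
      aux _ _ _ _ _ hpq hR2 hRpos.le
    linarith
end
end

section
/- For every natural number n ≥ 1, the function α ↦ (1 − cos(2nα)²)/(2·(1 − cos(2nα)·cos(2α))) tends to n²/(n² + 1) as α tends to 0 from the right (i.e. Filter.Tendsto along 𝓝[>] 0 to 𝓝 (n²/(n²+1))). (Leading order of Eq. (25) of the paper: the optimal success probability of perfect probabilistic storage and retrieval of two almost-identical unitaries approaches 1 − 1/(n²+1), a quadratic improvement in n over the group-covariant protocol.) -/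
open Matrix Kronecker Complex Filter
open scoped ComplexOrder

noncomputable section

lemma sin_div_limit : Filter.Tendsto (fun x : ℝ => Real.sin x / x) (nhdsWithin 0 {(0:ℝ)}ᶜ) (nhds 1) := by
  have h := (hasDerivAt_iff_tendsto_slope).mp (Real.hasDerivAt_sin 0)
  simp only [Real.cos_zero] at h
  refine h.congr (fun x => ?_)
  simp [slope, Real.sin_zero, div_eq_inv_mul]

lemma sin_mul_div_limit (c : ℝ) (hc : 0 < c) :
    Filter.Tendsto (fun α : ℝ => Real.sin (c * α) / α) (nhdsWithin 0 (Set.Ioi 0)) (nhds c) := by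
  have hmap : Filter.Tendsto (fun α : ℝ => c * α) (nhdsWithin 0 (Set.Ioi 0)) (nhdsWithin 0 {(0:ℝ)}ᶜ) := by
    apply tendsto_nhdsWithin_of_tendsto_nhds_of_eventually_within
    · have : Filter.Tendsto (fun α : ℝ => c * α) (nhds 0) (nhds 0) := by
        simpa using (tendsto_const_nhds (x := c)).mul (tendsto_id (x := nhds (0:ℝ)))
      exact this.mono_left nhdsWithin_le_nhds
    · filter_upwards [self_mem_nhdsWithin] with x hx
      exact ne_of_gt (mul_pos hc hx)
  have h := sin_div_limit.comp hmap
  have h2 : Filter.Tendsto (fun α : ℝ => c * (Real.sin (c * α) / (c * α))) (nhdsWithin 0 (Set.Ioi 0)) (nhds (c * 1)) :=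
    (tendsto_const_nhds (x := c)).mul h
  rw [mul_one] at h2
  refine h2.congr' ?_
  filter_upwards [self_mem_nhdsWithin] with x hx
  rw [← mul_div_assoc, mul_div_mul_left _ _ hc.ne']

theorem success_probability_small_alpha_limit (n : ℕ) (hn : 1 ≤ n) :
    Filter.Tendsto
      (fun α : ℝ => (1 - Real.cos (2 * n * α) ^ 2) /
        (2 * (1 - Real.cos (2 * n * α) * Real.cos (2 * α))))
      (nhdsWithin 0 (Set.Ioi 0))
      (nhds ((n : ℝ) ^ 2 / ((n : ℝ) ^ 2 + 1))) := by
  have hN : Filter.Tendsto (fun α : ℝ => (1 - Real.cos (2 * n * α) ^ 2) / α ^ 2)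
      (nhdsWithin 0 (Set.Ioi 0)) (nhds ((2 * (n:ℝ)) ^ 2)) := by
    have h := (sin_mul_div_limit (2 * (n:ℝ)) (by positivity)).mul
      (sin_mul_div_limit (2 * (n:ℝ)) (by positivity))
    rw [← sq] at h
    refine h.congr (fun α => ?_)
    have hs : (1:ℝ) - Real.cos (2 * n * α) ^ 2 = Real.sin (2 * n * α) ^ 2 := by
      nlinarith [Real.sin_sq_add_cos_sq (2 * n * α)]
    rw [hs]
    ring
  have hcos : Filter.Tendsto (fun α : ℝ => Real.cos (2 * n * α)) (nhdsWithin 0 (Set.Ioi 0))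
      (nhds 1) := by
    have : Filter.Tendsto (fun α : ℝ => Real.cos (2 * n * α)) (nhds 0) (nhds 1) := by
      have hc : Continuous (fun α : ℝ => Real.cos (2 * n * α)) :=
        Real.continuous_cos.comp (continuous_const.mul continuous_id)
      simpa using hc.tendsto (0 : ℝ)
    exact this.mono_left nhdsWithin_le_nhds
  have hone : ∀ c : ℝ, 0 < c → Filter.Tendsto (fun α : ℝ => (1 - Real.cos (c * α)) / α ^ 2)
      (nhdsWithin 0 (Set.Ioi 0)) (nhds (c ^ 2 / 2)) := by
    intro c hc
    have h := ((sin_mul_div_limit (c / 2) (by positivity)).mul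
      (sin_mul_div_limit (c / 2) (by positivity))).const_mul 2
    have heq : (2 : ℝ) * (c / 2 * (c / 2)) = c ^ 2 / 2 := by ring
    rw [heq] at h
    refine h.congr (fun α => ?_)
    have hy : Real.cos (c * α) = 1 - 2 * Real.sin (c / 2 * α) ^ 2 := by
      rw [show c * α = 2 * (c / 2 * α) by ring, Real.cos_two_mul]
      nlinarith [Real.sin_sq_add_cos_sq (c / 2 * α)]
    rw [hy]
    ring
  have hD : Filter.Tendsto (fun α : ℝ => (2 * (1 - Real.cos (2 * n * α) * Real.cos (2 * α))) / α ^ 2)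
      (nhdsWithin 0 (Set.Ioi 0)) (nhds (4 * (n:ℝ) ^ 2 + 4)) := by
    have h := ((hone (2 * (n:ℝ)) (by positivity)).add (hcos.mul (hone 2 (by norm_num)))).const_mul 2
    have heq : (2 : ℝ) * ((2 * (n:ℝ)) ^ 2 / 2 + 1 * (2 ^ 2 / 2)) = 4 * n ^ 2 + 4 := by ring
    rw [heq] at h
    refine h.congr (fun α => ?_)
    have : 1 - Real.cos (2 * n * α) * Real.cos (2 * α)
        = (1 - Real.cos (2 * n * α)) + Real.cos (2 * n * α) * (1 - Real.cos (2 * α)) := by ring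
    rw [this]
    ring
  have hDne : (4 : ℝ) * (n:ℝ) ^ 2 + 4 ≠ 0 := by positivity
  have h := hN.div hD hDne
  have heq : ((2 : ℝ) * (n:ℝ)) ^ 2 / (4 * (n:ℝ) ^ 2 + 4) = (n : ℝ) ^ 2 / ((n : ℝ) ^ 2 + 1) := by
    rw [div_eq_div_iff (by positivity) (by positivity)]
    ring
  rw [heq] at h
  refine h.congr' ?_
  filter_upwards [self_mem_nhdsWithin] with α hα
  have hα2 : (α : ℝ) ^ 2 ≠ 0 := pow_ne_zero _ (ne_of_gt hα)
  simp only [Pi.div_apply]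
  rw [div_div_div_cancel_right₀ hα2]
end
end

section
/- Let α, θ be real numbers with 0 ≤ 2α ≤ π/2 and |θ| ≤ 2α. Then the complex absolute value ‖(1 : ℂ) − cos(2α)·exp(i·θ)‖ ≤ sin(2α). (The key inequality of Appendix C of the paper guaranteeing that the ansatz isometry for perfect probabilistic retrieval in dimension d > 2 exists in the large-α regime: the junk-state overlaps y_{k,k} = (1 − cos(2α)·e^{iθ})/sin(2α) have modulus at most 1 whenever the eigenphase difference θ of the relative unitary satisfies |θ| ≤ 2α.) -/
open Matrix Kronecker Complex Filter
open scoped ComplexOrder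

noncomputable section

theorem junk_overlap_bound (α θ : ℝ) (h0 : 0 ≤ 2 * α) (h1 : 2 * α ≤ Real.pi / 2)
    (hθ : |θ| ≤ 2 * α) :
    ‖(1 : ℂ) - (Real.cos (2 * α) : ℂ) * Complex.exp (Complex.I * θ)‖
      ≤ Real.sin (2 * α) := by
  have hpi : Real.pi / 2 ≤ Real.pi := by linarith [Real.pi_pos]
  have hs : 0 ≤ Real.sin (2 * α) :=
    Real.sin_nonneg_of_nonneg_of_le_pi h0 (le_trans h1 hpi)
  have hc : 0 ≤ Real.cos (2 * α) := Real.cos_nonneg_of_mem_Icc ⟨by linarith, h1⟩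
  have hcos : Real.cos (2 * α) ≤ Real.cos θ := by
    rw [← Real.cos_abs θ]
    exact Real.cos_le_cos_of_nonneg_of_le_pi (abs_nonneg θ) (le_trans h1 hpi) hθ
  have hz : ((1 : ℂ) - (Real.cos (2 * α) : ℂ) * Complex.exp (Complex.I * θ)) =
      Complex.mk (1 - Real.cos (2 * α) * Real.cos θ) (-(Real.cos (2 * α) * Real.sin θ)) := by
    rw [mul_comm Complex.I (θ : ℂ), Complex.exp_mul_I]
    apply Complex.ext <;> simp [Complex.cos_ofReal_re, Complex.cos_ofReal_im, Complex.sin_ofReal_re, ← Complex.ofReal_mul]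
  rw [hz, ← Real.sqrt_sq hs, Complex.norm_def]
  apply Real.sqrt_le_sqrt
  rw [Complex.normSq_mk]
  have hpyth := Real.sin_sq_add_cos_sq θ
  have hpyth2 := Real.sin_sq_add_cos_sq (2 * α)
  nlinarith [mul_nonneg hc (sub_nonneg.mpr hcos)]
end
end

section
/- Let n be a natural number with n ≥ 1, α a real number with 0 < α and 4·n·α < π, and θ a real number with |θ| ≤ 2α. Set P := (1 − cos(2nα)²)/(2·(1 − cos(2nα)·cos(2α))). Then 0 ≤ P ≤ 1 and the complex absolute value ‖(cos(2nα) : ℂ) − P·exp(i·θ)‖ ≤ 1 − P. (The feasibility inequality of Appendix C of the paper in the small-α regime: with x = 1 the junk-state overlaps y = (cos(2nα) − P·e^{iθ})/(1 − P) have modulus at most 1, so the optimal qubit success probability is achievable for two unitaries in any dimension d.) -/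
open Matrix Kronecker Complex Filter
open scoped ComplexOrder

noncomputable section

set_option maxHeartbeats 1000000

theorem feasibility_small_alpha (n : ℕ) (hn : 1 ≤ n) (α : ℝ) (hα : 0 < α)
    (hdist : 4 * n * α < Real.pi) (θ : ℝ) (hθ : |θ| ≤ 2 * α) :
    0 ≤ (1 - Real.cos (2 * n * α) ^ 2) / (2 * (1 - Real.cos (2 * n * α) * Real.cos (2 * α))) ∧
    (1 - Real.cos (2 * n * α) ^ 2) / (2 * (1 - Real.cos (2 * n * α) * Real.cos (2 * α))) ≤ 1 ∧
    ‖(Real.cos (2 * n * α) : ℂ) -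
        (((1 - Real.cos (2 * n * α) ^ 2) /
          (2 * (1 - Real.cos (2 * n * α) * Real.cos (2 * α))) : ℝ) : ℂ) *
        Complex.exp (Complex.I * θ)‖
      ≤ 1 - (1 - Real.cos (2 * n * α) ^ 2) /
          (2 * (1 - Real.cos (2 * n * α) * Real.cos (2 * α))) := by
  have hn1 : (1 : ℝ) ≤ (n : ℝ) := by exact_mod_cast hn
  set c := Real.cos (2 * n * α) with hc
  set b := Real.cos (2 * α) with hb
  have hπ := Real.pi_pos
  have hnα : 2 * (n : ℝ) * α < Real.pi / 2 := by linarith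
  have hnα0 : 0 < 2 * (n : ℝ) * α := by positivity
  have h2α : 2 * α ≤ 2 * (n : ℝ) * α := by nlinarith
  have hc0 : 0 < c := Real.cos_pos_of_mem_Ioo ⟨by linarith, hnα⟩
  have hc1 : c < 1 := by
    have := Real.cos_lt_cos_of_nonneg_of_le_pi le_rfl (by linarith) hnα0
    simpa using this
  have hb1 : b ≤ 1 := Real.cos_le_one _
  have hb0 : 0 < b := Real.cos_pos_of_mem_Ioo ⟨by linarith, by linarith⟩
  have hcosθ : b ≤ Real.cos θ := by
    rw [← Real.cos_abs θ]
    exact Real.cos_le_cos_of_nonneg_of_le_pi (abs_nonneg θ) (by linarith) hθ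
  have hD : 0 < 2 * (1 - c * b) := by nlinarith
  set P := (1 - c ^ 2) / (2 * (1 - c * b)) with hP
  have hPkey : 2 * P * (1 - c * b) = 1 - c ^ 2 := by
    rw [hP, show ∀ x : ℝ, 2 * x * (1 - c * b) = x * (2 * (1 - c * b)) from fun x => by ring, div_mul_cancel₀ _ hD.ne']
  have hP0 : 0 ≤ P := by
    apply div_nonneg _ hD.le
    nlinarith [Real.cos_le_one (2 * n * α)]
  have hP1 : P ≤ 1 := by
    rw [hP, div_le_one hD]
    nlinarith
  refine ⟨hP0, hP1, ?_⟩
  set z : ℂ := (c : ℂ) - (P : ℂ) * Complex.exp (Complex.I * θ) with hz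
  have hre : z.re = c - P * Real.cos θ := by
    simp [hz, Complex.ext_iff, Complex.exp_re, Complex.exp_im]
  have him : z.im = -(P * Real.sin θ) := by
    simp [hz, Complex.ext_iff, Complex.exp_re, Complex.exp_im]
  have hsq : ‖z‖ ^ 2 = c ^ 2 - 2 * P * c * Real.cos θ + P ^ 2 := by
    rw [Complex.sq_norm, Complex.normSq_apply, hre, him]
    nlinarith [Real.sin_sq_add_cos_sq θ]
  have key : 2 * P * c * b ≤ 2 * P * c * Real.cos θ := by
    have h2 : 0 ≤ 2 * P * c := by positivity
    exact mul_le_mul_of_nonneg_left hcosθ h2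
  have hPkey' : 2 * P - 2 * P * c * b = 1 - c ^ 2 := by linear_combination hPkey
  have hle : ‖z‖ ^ 2 ≤ (1 - P) ^ 2 := by
    rw [hsq, show (1 - P) ^ 2 = 1 - 2 * P + P ^ 2 by ring]
    linarith
  have habs : 0 ≤ ‖z‖ := norm_nonneg z
  nlinarith [hle, habs, hP1]
end
end
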